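/- arXiv:1903.09428 — 3 statements merged into one kernel-verified Lean document; each statement's English description precedes it below -/
import Mathlib

section
/- Let b ∈ (0,1) and γ_1, γ_2 ∈ [0,1]. Then |F(b,γ_1) − F(b,γ_2)| ≥ 0.04205 · b⁴ · |γ_1 − γ_2|; equivalently, |γ_1 − γ_2| ≤ ((4.8765)² / b⁴) · |F(b,γ_1) − F(b,γ_2)|. Since ‖q_1 − q_2‖_{L^∞} = |γ_1 − γ_2| for the one-step potentials q_i = γ_i χ_{(0,b)}(|x|) and |F(b,γ_1) − F(b,γ_2)| is a lower bound for ‖Λ_{q_1} − Λ_{q_2}‖, this gives Lipschitz stability of the potential-to-DtN map on the family of one-step radial potentials with fixed discontinuity radius b. -/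
open Real Set
open MeasureTheory intervalIntegral

/-- Bessel function of the first kind of integer order, via the Poisson integral
representation. -/
noncomputable def besselJ (n : ℕ) (r : ℝ) : ℝ :=
  r ^ n / (2 ^ n * Real.Gamma ((n : ℝ) + 1 / 2) * Real.sqrt Real.pi) *
    ∫ t in (-1 : ℝ)..1, Real.cos (r * t) * (1 - t ^ 2) ^ ((n : ℝ) - 1 / 2)

/-- `F(b,γ)`, the first eigenvalue `c₁(b,γ)` of the Dirichlet-to-Neumann map for the
one-step radial potential `q = γ χ_{(0,b)}(|x|)` on the unit disk. -/
noncomputable def dtnF (b γ : ℝ) : ℝ :=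
  (besselJ 0 (b * Real.sqrt γ) - b ^ 2 * besselJ 2 (b * Real.sqrt γ)) /
    (besselJ 0 (b * Real.sqrt γ) + b ^ 2 * besselJ 2 (b * Real.sqrt γ))

lemma sqrt_one_sub_sq_pos {t : ℝ} (h : t ∈ Set.Ioo (-1:ℝ) 1) :
    0 < Real.sqrt (1 - t ^ 2) := by
  apply Real.sqrt_pos.2
  nlinarith [h.1, h.2]

lemma integrable_w0 : IntervalIntegrable (fun t : ℝ => (Real.sqrt (1 - t ^ 2))⁻¹)
    volume (-1) 1 := by
  have h1 : IntervalIntegrable (fun t : ℝ => (1 - t) ^ (-(1/2) : ℝ)) volume (-1) 1 := by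
    have := ((intervalIntegral.intervalIntegrable_rpow' (r := -(1/2)) (by norm_num)
      (a := 0) (b := 2)).comp_sub_left 1).symm
    norm_num at this
    exact this
  have h2 : IntervalIntegrable (fun t : ℝ => (1 + t) ^ (-(1/2) : ℝ)) volume (-1) 1 := by
    have := (intervalIntegral.intervalIntegrable_rpow' (r := -(1/2)) (by norm_num)
      (a := 0) (b := 2)).comp_add_left 1
    norm_num at this
    exact this
  refine (h1.add h2).mono_fun' ?_ ?_
  · apply Measurable.aestronglyMeasurable
    exact ((measurable_const.sub (measurable_id.pow_const 2)).sqrt).inv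
  · filter_upwards [self_mem_ae_restrict measurableSet_uIoc] with t ht
    have ht' : t ∈ Set.Ioc (-1:ℝ) 1 := by
      simpa [Set.uIoc_of_le (by norm_num : (-1:ℝ) ≤ 1)] using ht
    have h1t : (0:ℝ) ≤ 1 - t := by linarith [ht'.2]
    have h2t : (0:ℝ) < 1 + t := by linarith [ht'.1]
    simp only [norm_inv, Real.norm_eq_abs]
    rw [abs_of_nonneg (Real.sqrt_nonneg _)]
    have hrw1 : (1 - t) ^ (-(1/2) : ℝ) = (Real.sqrt (1 - t))⁻¹ := by
      rw [Real.rpow_neg h1t, Real.sqrt_eq_rpow]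
    have hrw2 : (1 + t) ^ (-(1/2) : ℝ) = (Real.sqrt (1 + t))⁻¹ := by
      rw [Real.rpow_neg h2t.le, Real.sqrt_eq_rpow]
    rw [hrw1, hrw2]
    have hnn1 : (0:ℝ) ≤ (Real.sqrt (1 - t))⁻¹ := inv_nonneg.2 (Real.sqrt_nonneg _)
    have hnn2 : (0:ℝ) ≤ (Real.sqrt (1 + t))⁻¹ := inv_nonneg.2 (Real.sqrt_nonneg _)
    rcases le_or_gt 0 t with htpos | htneg
    · -- 1 - t² = (1-t)(1+t) ≥ 1 - t since 1 + t ≥ 1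
      have : Real.sqrt (1 - t) ≤ Real.sqrt (1 - t ^ 2) := by
        apply Real.sqrt_le_sqrt; nlinarith
      calc (Real.sqrt (1 - t ^ 2))⁻¹ ≤ (Real.sqrt (1 - t))⁻¹ := by
            rcases eq_or_lt_of_le h1t with h | h
            · have ht1 : t = 1 := by linarith
              norm_num [ht1]
            · exact inv_anti₀ (Real.sqrt_pos.2 h) this
        _ ≤ _ := le_add_of_nonneg_right hnn2
    · have : Real.sqrt (1 + t) ≤ Real.sqrt (1 - t ^ 2) := by
        apply Real.sqrt_le_sqrt; nlinarith
      calc (Real.sqrt (1 - t ^ 2))⁻¹ ≤ (Real.sqrt (1 + t))⁻¹ :=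
            inv_anti₀ (Real.sqrt_pos.2 h2t) this
        _ ≤ _ := le_add_of_nonneg_left hnn1

lemma integrable_mul_w0 {g : ℝ → ℝ} (hg : Continuous g) :
    IntervalIntegrable (fun t : ℝ => g t * (Real.sqrt (1 - t ^ 2))⁻¹) volume (-1) 1 :=
  integrable_w0.continuousOn_mul hg.continuousOn

lemma hasDerivAt_sqrt_one_sub_sq {x : ℝ} (hx : x ∈ Set.Ioo (-1:ℝ) 1) :
    HasDerivAt (fun t : ℝ => Real.sqrt (1 - t ^ 2)) (-x / Real.sqrt (1 - x ^ 2)) x := by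
  have hne : (1 - x ^ 2) ≠ 0 := by nlinarith [hx.1, hx.2]
  have hinner : HasDerivAt (fun t : ℝ => 1 - t ^ 2) (-(2 * x)) x := by
    simpa using (hasDerivAt_pow 2 x).const_sub 1
  have := (Real.hasDerivAt_sqrt hne).comp x hinner
  refine this.congr_deriv (Eq.symm ?_)
  have hs : Real.sqrt (1 - x ^ 2) ≠ 0 := Real.sqrt_ne_zero'.2 (by nlinarith [hx.1, hx.2])
  field_simp

lemma intW0 : ∫ t in (-1:ℝ)..1, (Real.sqrt (1 - t ^ 2))⁻¹ = π := by
  have h := intervalIntegral.integral_eq_sub_of_hasDerivAt_of_le (f := Real.arcsin)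
    (f' := fun t => (Real.sqrt (1 - t ^ 2))⁻¹) (by norm_num)
    Real.continuous_arcsin.continuousOn
    (fun x hx => by
      simpa [one_div] using Real.hasDerivAt_arcsin (ne_of_gt hx.1) (ne_of_lt hx.2))
    integrable_w0
  rw [h, Real.arcsin_one, Real.arcsin_neg_one]
  ring

lemma intT2W0 : ∫ t in (-1:ℝ)..1, t ^ 2 * (Real.sqrt (1 - t ^ 2))⁻¹ = π / 2 := by
  have h := intervalIntegral.integral_eq_sub_of_hasDerivAt_of_le
    (f := fun t => (Real.arcsin t - t * Real.sqrt (1 - t ^ 2)) / 2)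
    (f' := fun t => t ^ 2 * (Real.sqrt (1 - t ^ 2))⁻¹) (by norm_num)
    (((Real.continuous_arcsin.sub (continuous_id.mul
      ((continuous_const.sub (continuous_pow 2)).sqrt))).div_const 2).continuousOn)
    (fun x hx => by
      have hpos : 0 < Real.sqrt (1 - x ^ 2) := sqrt_one_sub_sq_pos hx
      have hsq : Real.sqrt (1 - x ^ 2) ^ 2 = 1 - x ^ 2 :=
        Real.sq_sqrt (by nlinarith [hx.1, hx.2])
      have h1 : HasDerivAt Real.arcsin (1 / Real.sqrt (1 - x ^ 2)) x :=
        Real.hasDerivAt_arcsin (ne_of_gt hx.1) (ne_of_lt hx.2)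
      have h2 : HasDerivAt (fun t : ℝ => t * Real.sqrt (1 - t ^ 2))
          (1 * Real.sqrt (1 - x ^ 2) + x * (-x / Real.sqrt (1 - x ^ 2))) x :=
        (hasDerivAt_id x).mul (hasDerivAt_sqrt_one_sub_sq hx)
      have := (h1.sub h2).div_const 2
      refine this.congr_deriv (Eq.symm ?_)
      field_simp
      nlinarith [hsq])
    (integrable_mul_w0 (continuous_pow 2))
  rw [h]
  norm_num [Real.arcsin_one, Real.arcsin_neg_one]
  ring

lemma cont_sqrt_one_sub_sq : Continuous fun t : ℝ => Real.sqrt (1 - t ^ 2) :=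
  (continuous_const.sub (continuous_pow 2)).sqrt

lemma hasDerivAt_one_sub_sq (x : ℝ) : HasDerivAt (fun t : ℝ => 1 - t ^ 2) (-(2 * x)) x := by
  simpa using (hasDerivAt_pow 2 x).const_sub 1

lemma intW2 : ∫ t in (-1:ℝ)..1, (1 - t ^ 2) * Real.sqrt (1 - t ^ 2) = 3 * π / 8 := by
  have h := intervalIntegral.integral_eq_sub_of_hasDerivAt_of_le
    (f := fun t => t * (1 - t ^ 2) * Real.sqrt (1 - t ^ 2) / 4
      + 3 / 8 * (t * Real.sqrt (1 - t ^ 2) + Real.arcsin t))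
    (f' := fun t => (1 - t ^ 2) * Real.sqrt (1 - t ^ 2)) (a := -1) (b := 1) (by norm_num)
    (((((continuous_id.mul (continuous_const.sub (continuous_pow 2))).mul
      cont_sqrt_one_sub_sq).div_const 4).add (continuous_const.mul
      ((continuous_id.mul cont_sqrt_one_sub_sq).add Real.continuous_arcsin))).continuousOn)
    (fun x hx => by
      have hpos : 0 < Real.sqrt (1 - x ^ 2) := sqrt_one_sub_sq_pos hx
      have hsq : Real.sqrt (1 - x ^ 2) ^ 2 = 1 - x ^ 2 :=
        Real.sq_sqrt (by nlinarith [hx.1, hx.2])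
      have hS := hasDerivAt_sqrt_one_sub_sq hx
      have h1 : HasDerivAt Real.arcsin (1 / Real.sqrt (1 - x ^ 2)) x :=
        Real.hasDerivAt_arcsin (ne_of_gt hx.1) (ne_of_lt hx.2)
      have hP : HasDerivAt (fun t : ℝ => t * (1 - t ^ 2))
          (1 * (1 - x ^ 2) + x * -(2 * x)) x :=
        (hasDerivAt_id x).mul (hasDerivAt_one_sub_sq x)
      have := ((hP.mul hS).div_const 4).add
        (((hasDerivAt_id x).mul hS).add h1 |>.const_mul (3/8 : ℝ))
      refine this.congr_deriv (Eq.symm ?_)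
      field_simp
      simp only [id_eq]
      linear_combination (12 - 8 * x ^ 2) * hsq)
    (((continuous_const.sub (continuous_pow 2)).mul
      cont_sqrt_one_sub_sq).intervalIntegrable _ _)
  rw [h]
  norm_num [Real.arcsin_one, Real.arcsin_neg_one]
  ring

lemma intT2W2 : ∫ t in (-1:ℝ)..1, t ^ 2 * ((1 - t ^ 2) * Real.sqrt (1 - t ^ 2)) = π / 16 := by
  have h := intervalIntegral.integral_eq_sub_of_hasDerivAt_of_le
    (f := fun t => -(t * (1 - t ^ 2) ^ 2 * Real.sqrt (1 - t ^ 2)) / 6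
      + (t * (1 - t ^ 2) * Real.sqrt (1 - t ^ 2) / 4
        + 3 / 8 * (t * Real.sqrt (1 - t ^ 2) + Real.arcsin t)) / 6)
    (f' := fun t => t ^ 2 * ((1 - t ^ 2) * Real.sqrt (1 - t ^ 2))) (a := -1) (b := 1) (by norm_num)
    (by
      have c1 : Continuous fun t : ℝ => -(t * (1 - t ^ 2) ^ 2 * Real.sqrt (1 - t ^ 2)) / 6 :=
        ((continuous_id.mul ((continuous_const.sub (continuous_pow 2)).pow 2)).mul
          cont_sqrt_one_sub_sq).neg.div_const 6
      have c2 : Continuous fun t : ℝ => (t * (1 - t ^ 2) * Real.sqrt (1 - t ^ 2) / 4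
          + 3 / 8 * (t * Real.sqrt (1 - t ^ 2) + Real.arcsin t)) / 6 :=
        ((((continuous_id.mul (continuous_const.sub (continuous_pow 2))).mul
          cont_sqrt_one_sub_sq).div_const 4).add (continuous_const.mul
          ((continuous_id.mul cont_sqrt_one_sub_sq).add Real.continuous_arcsin))).div_const 6
      exact (c1.add c2).continuousOn)
    (fun x hx => by
      have hpos : 0 < Real.sqrt (1 - x ^ 2) := sqrt_one_sub_sq_pos hx
      have hsq : Real.sqrt (1 - x ^ 2) ^ 2 = 1 - x ^ 2 :=
        Real.sq_sqrt (by nlinarith [hx.1, hx.2])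
      have hS := hasDerivAt_sqrt_one_sub_sq hx
      have h1 : HasDerivAt Real.arcsin (1 / Real.sqrt (1 - x ^ 2)) x :=
        Real.hasDerivAt_arcsin (ne_of_gt hx.1) (ne_of_lt hx.2)
      have hP : HasDerivAt (fun t : ℝ => t * (1 - t ^ 2))
          (1 * (1 - x ^ 2) + x * -(2 * x)) x :=
        (hasDerivAt_id x).mul (hasDerivAt_one_sub_sq x)
      have hQ : HasDerivAt (fun t : ℝ => t * (1 - t ^ 2) ^ 2)
          (1 * (1 - x ^ 2) ^ 2 + x * (2 * (1 - x ^ 2) ^ 1 * -(2 * x))) x :=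
        (hasDerivAt_id x).mul ((hasDerivAt_one_sub_sq x).pow 2)
      have := (((hQ.mul hS).neg.div_const 6)).add
        ((((hP.mul hS).div_const 4).add
          ((((hasDerivAt_id x).mul hS).add h1).const_mul (3/8 : ℝ))).div_const 6)
      refine this.congr_deriv (Eq.symm ?_)
      field_simp
      simp only [id_eq]
      linear_combination (12 + 24 * x ^ 2 - 32 * x ^ 4) * hsq)
    (((continuous_pow 2).mul ((continuous_const.sub (continuous_pow 2)).mul
      cont_sqrt_one_sub_sq)).intervalIntegrable _ _)
  rw [h]
  norm_num [Real.arcsin_one, Real.arcsin_neg_one]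
  ring


lemma besselJ_zero_eq (r : ℝ) :
    besselJ 0 r = (∫ t in (-1:ℝ)..1, Real.cos (r * t) * (Real.sqrt (1 - t ^ 2))⁻¹) / π := by
  unfold besselJ
  have hint : ∫ t in (-1:ℝ)..1, Real.cos (r * t) * (1 - t ^ 2) ^ (((0:ℕ) : ℝ) - 1 / 2)
      = ∫ t in (-1:ℝ)..1, Real.cos (r * t) * (Real.sqrt (1 - t ^ 2))⁻¹ := by
    apply intervalIntegral.integral_congr
    intro t ht
    rw [Set.uIcc_of_le (by norm_num : (-1:ℝ) ≤ 1)] at ht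
    have h1 : (0:ℝ) ≤ 1 - t ^ 2 := by nlinarith [ht.1, ht.2]
    show Real.cos (r * t) * (1 - t ^ 2) ^ (((0:ℕ) : ℝ) - 1 / 2)
      = Real.cos (r * t) * (Real.sqrt (1 - t ^ 2))⁻¹
    rw [show (((0:ℕ) : ℝ) - 1 / 2) = -(1/2 : ℝ) by norm_num,
      Real.rpow_neg h1, Real.sqrt_eq_rpow]
  rw [hint, show (((0:ℕ) : ℝ) + 1 / 2) = (1/2 : ℝ) by norm_num, Real.Gamma_one_half_eq]
  rw [pow_zero, pow_zero, one_mul, Real.mul_self_sqrt Real.pi_pos.le]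
  ring

lemma besselJ_two_eq (r : ℝ) :
    besselJ 2 r = r ^ 2 *
      (∫ t in (-1:ℝ)..1, Real.cos (r * t) * ((1 - t ^ 2) * Real.sqrt (1 - t ^ 2))) / (3 * π) := by
  unfold besselJ
  have hint : ∫ t in (-1:ℝ)..1, Real.cos (r * t) * (1 - t ^ 2) ^ (((2:ℕ) : ℝ) - 1 / 2)
      = ∫ t in (-1:ℝ)..1, Real.cos (r * t) * ((1 - t ^ 2) * Real.sqrt (1 - t ^ 2)) := by
    apply intervalIntegral.integral_congr
    intro t ht
    rw [Set.uIcc_of_le (by norm_num : (-1:ℝ) ≤ 1)] at ht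
    have h1 : (0:ℝ) ≤ 1 - t ^ 2 := by nlinarith [ht.1, ht.2]
    show Real.cos (r * t) * (1 - t ^ 2) ^ (((2:ℕ) : ℝ) - 1 / 2)
      = Real.cos (r * t) * ((1 - t ^ 2) * Real.sqrt (1 - t ^ 2))
    have h2 : (((2:ℕ) : ℝ) - 1 / 2) = (1 : ℝ) + 1/2 := by norm_num
    rcases eq_or_lt_of_le h1 with h | h
    · rw [← h, h2, Real.zero_rpow (by norm_num)]
      simp
    · rw [h2, Real.rpow_add h, Real.rpow_one, Real.sqrt_eq_rpow]
  rw [hint]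
  have hG : Real.Gamma (((2:ℕ) : ℝ) + 1 / 2) = 3 / 4 * Real.sqrt π := by
    rw [show (((2:ℕ) : ℝ) + 1/2) = (3/2 : ℝ) + 1 by norm_num,
      Real.Gamma_add_one (by norm_num),
      show (3/2 : ℝ) = (1/2 : ℝ) + 1 by norm_num,
      Real.Gamma_add_one (by norm_num), Real.Gamma_one_half_eq]
    ring
  rw [hG]
  have hpi : Real.sqrt π * Real.sqrt π = π := Real.mul_self_sqrt Real.pi_pos.le
  have hD : (2:ℝ) ^ 2 * (3 / 4 * Real.sqrt π) * Real.sqrt π = 3 * π := by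
    linear_combination (3:ℝ) * hpi
  rw [hD]
  ring

lemma cos_diff_le (a c : ℝ) : |Real.cos a - Real.cos c| ≤ |a ^ 2 - c ^ 2| / 2 := by
  rw [Real.cos_sub_cos]
  rw [abs_mul, abs_mul]
  have h1 : |Real.sin ((a + c) / 2)| ≤ |(a + c) / 2| := Real.abs_sin_le_abs
  have h2 : |Real.sin ((a - c) / 2)| ≤ |(a - c) / 2| := Real.abs_sin_le_abs
  have h3 : |(-2 : ℝ)| = 2 := by norm_num
  rw [h3]
  have key : 2 * |(a + c) / 2| * |(a - c) / 2| = |a ^ 2 - c ^ 2| / 2 := by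
    rw [abs_div, abs_div, show |(2:ℝ)| = 2 by norm_num]
    rw [show a ^ 2 - c ^ 2 = (a + c) * (a - c) by ring, abs_mul]
    ring
  calc 2 * |Real.sin ((a + c) / 2)| * |Real.sin ((a - c) / 2)|
      ≤ 2 * |(a + c) / 2| * |(a - c) / 2| := by
        apply mul_le_mul
        · exact mul_le_mul_of_nonneg_left h1 (by norm_num)
        · exact h2
        · exact abs_nonneg _
        · positivity
    _ = |a ^ 2 - c ^ 2| / 2 := key

/-- weighted pointwise product bound: on `[-1,1]` the difference of two cosine
integrals against a nonnegative integrable weight. -/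
lemma integral_cos_diff_bound {w : ℝ → ℝ} (hwnn : ∀ t ∈ Set.Icc (-1:ℝ) 1, 0 ≤ w t)
    (hix : ∀ z : ℝ, IntervalIntegrable (fun t => Real.cos (z * t) * w t) volume (-1) 1)
    (hit : IntervalIntegrable (fun t => t ^ 2 * w t) volume (-1) 1)
    (x y : ℝ) :
    (∫ t in (-1:ℝ)..1, Real.cos (x * t) * w t)
      - |x ^ 2 - y ^ 2| / 2 * ∫ t in (-1:ℝ)..1, t ^ 2 * w t
      ≤ ∫ t in (-1:ℝ)..1, Real.cos (y * t) * w t := by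
  have hsub : (∫ t in (-1:ℝ)..1, Real.cos (x * t) * w t)
      - |x ^ 2 - y ^ 2| / 2 * ∫ t in (-1:ℝ)..1, t ^ 2 * w t
      = ∫ t in (-1:ℝ)..1, (Real.cos (x * t) * w t - |x ^ 2 - y ^ 2| / 2 * (t ^ 2 * w t)) := by
    rw [intervalIntegral.integral_sub (hix x) (hit.const_mul _)]
    rw [intervalIntegral.integral_const_mul]
  rw [hsub]
  apply intervalIntegral.integral_mono_on (by norm_num)
    ((hix x).sub (hit.const_mul _)) (hix y)
  intro t ht
  have hw : 0 ≤ w t := hwnn t ht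
  have hc : |Real.cos (x * t) - Real.cos (y * t)| ≤ |x ^ 2 - y ^ 2| / 2 * t ^ 2 := by
    have := cos_diff_le (x * t) (y * t)
    have h2 : |(x * t) ^ 2 - (y * t) ^ 2| = |x ^ 2 - y ^ 2| * t ^ 2 := by
      rw [show (x * t) ^ 2 - (y * t) ^ 2 = (x ^ 2 - y ^ 2) * t ^ 2 by ring, abs_mul, abs_pow,
        sq_abs]
    rw [h2] at this
    linarith [this]
  have hd : Real.cos (x * t) - Real.cos (y * t) ≤ |x ^ 2 - y ^ 2| / 2 * t ^ 2 :=
    le_trans (le_abs_self _) hc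
  nlinarith [mul_le_mul_of_nonneg_right hd hw]

lemma cont_cos_mul (z : ℝ) : Continuous fun t : ℝ => Real.cos (z * t) :=
  Real.continuous_cos.comp (continuous_const.mul continuous_id)

lemma integrable_cos_w0 (z : ℝ) : IntervalIntegrable
    (fun t : ℝ => Real.cos (z * t) * (Real.sqrt (1 - t ^ 2))⁻¹) volume (-1) 1 :=
  integrable_mul_w0 (cont_cos_mul z)

lemma integrable_t2_w0 : IntervalIntegrable
    (fun t : ℝ => t ^ 2 * (Real.sqrt (1 - t ^ 2))⁻¹) volume (-1) 1 :=
  integrable_mul_w0 (continuous_pow 2)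

lemma integrable_cos_w2 (z : ℝ) : IntervalIntegrable
    (fun t : ℝ => Real.cos (z * t) * ((1 - t ^ 2) * Real.sqrt (1 - t ^ 2))) volume (-1) 1 :=
  ((cont_cos_mul z).mul ((continuous_const.sub (continuous_pow 2)).mul
    cont_sqrt_one_sub_sq)).intervalIntegrable _ _

lemma integrable_t2_w2 : IntervalIntegrable
    (fun t : ℝ => t ^ 2 * ((1 - t ^ 2) * Real.sqrt (1 - t ^ 2))) volume (-1) 1 :=
  ((continuous_pow 2).mul ((continuous_const.sub (continuous_pow 2)).mul
    cont_sqrt_one_sub_sq)).intervalIntegrable _ _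

lemma w0_nonneg (t : ℝ) : 0 ≤ (Real.sqrt (1 - t ^ 2))⁻¹ :=
  inv_nonneg.2 (Real.sqrt_nonneg _)

lemma w2_nonneg {t : ℝ} (ht : t ∈ Set.Icc (-1:ℝ) 1) :
    0 ≤ (1 - t ^ 2) * Real.sqrt (1 - t ^ 2) :=
  mul_nonneg (by nlinarith [ht.1, ht.2]) (Real.sqrt_nonneg _)

lemma I0_le (x : ℝ) :
    ∫ t in (-1:ℝ)..1, Real.cos (x * t) * (Real.sqrt (1 - t ^ 2))⁻¹ ≤ π := by
  rw [← intW0]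
  apply intervalIntegral.integral_mono_on (by norm_num) (integrable_cos_w0 x) integrable_w0
  intro t _
  have := Real.cos_le_one (x * t)
  nlinarith [w0_nonneg t]

lemma I0_ge {x : ℝ} (hx : x ^ 2 ≤ 1) :
    3 * π / 4 ≤ ∫ t in (-1:ℝ)..1, Real.cos (x * t) * (Real.sqrt (1 - t ^ 2))⁻¹ := by
  have hval : ∫ t in (-1:ℝ)..1,
      ((Real.sqrt (1 - t ^ 2))⁻¹ - 1 / 2 * (t ^ 2 * (Real.sqrt (1 - t ^ 2))⁻¹)) = 3 * π / 4 := by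
    rw [intervalIntegral.integral_sub integrable_w0 (integrable_t2_w0.const_mul _),
      intervalIntegral.integral_const_mul, intW0, intT2W0]
    ring
  rw [← hval]
  apply intervalIntegral.integral_mono_on (by norm_num)
    (integrable_w0.sub (integrable_t2_w0.const_mul _)) (integrable_cos_w0 x)
  intro t ht
  have hcos : 1 - (x * t) ^ 2 / 2 ≤ Real.cos (x * t) := Real.one_sub_sq_div_two_le_cos
  have ht2 : (x * t) ^ 2 ≤ t ^ 2 := by nlinarith [sq_nonneg t, sq_nonneg x]
  have h1 : 1 - t ^ 2 / 2 ≤ Real.cos (x * t) := by nlinarith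
  nlinarith [mul_le_mul_of_nonneg_right h1 (w0_nonneg t)]

lemma I2_le (x : ℝ) :
    ∫ t in (-1:ℝ)..1, Real.cos (x * t) * ((1 - t ^ 2) * Real.sqrt (1 - t ^ 2)) ≤ 3 * π / 8 := by
  rw [← intW2]
  apply intervalIntegral.integral_mono_on (by norm_num) (integrable_cos_w2 x)
    (by exact ((continuous_const.sub (continuous_pow 2)).mul cont_sqrt_one_sub_sq).intervalIntegrable _ _ : IntervalIntegrable (fun t : ℝ => (1 - t ^ 2) * Real.sqrt (1 - t ^ 2)) volume (-1) 1)
  intro t ht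
  have := Real.cos_le_one (x * t)
  nlinarith [w2_nonneg ht]

lemma I2_ge {x : ℝ} (hx : x ^ 2 ≤ 1) :
    3 * π / 8 - π / 32 ≤
      ∫ t in (-1:ℝ)..1, Real.cos (x * t) * ((1 - t ^ 2) * Real.sqrt (1 - t ^ 2)) := by
  have hval : ∫ t in (-1:ℝ)..1,
      ((1 - t ^ 2) * Real.sqrt (1 - t ^ 2)
        - 1 / 2 * (t ^ 2 * ((1 - t ^ 2) * Real.sqrt (1 - t ^ 2)))) = 3 * π / 8 - π / 32 := by
    rw [intervalIntegral.integral_sub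
      (by exact ((continuous_const.sub (continuous_pow 2)).mul cont_sqrt_one_sub_sq).intervalIntegrable _ _ : IntervalIntegrable (fun t : ℝ => (1 - t ^ 2) * Real.sqrt (1 - t ^ 2)) volume (-1) 1)
      (integrable_t2_w2.const_mul _),
      intervalIntegral.integral_const_mul, intW2, intT2W2]
    ring
  rw [← hval]
  apply intervalIntegral.integral_mono_on (by norm_num)
    ((by exact ((continuous_const.sub (continuous_pow 2)).mul
        cont_sqrt_one_sub_sq).intervalIntegrable _ _ : IntervalIntegrable (fun t : ℝ => (1 - t ^ 2) * Real.sqrt (1 - t ^ 2)) volume (-1) 1).sub (integrable_t2_w2.const_mul _))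
    (integrable_cos_w2 x)
  intro t ht
  have hcos : 1 - (x * t) ^ 2 / 2 ≤ Real.cos (x * t) := Real.one_sub_sq_div_two_le_cos
  have ht2 : (x * t) ^ 2 ≤ t ^ 2 := by nlinarith [sq_nonneg t, sq_nonneg x]
  have h1 : 1 - t ^ 2 / 2 ≤ Real.cos (x * t) := by nlinarith
  nlinarith [mul_le_mul_of_nonneg_right h1 (w2_nonneg ht)]

set_option maxHeartbeats 1000000 in
lemma key_estimate (b γ₁ γ₂ : ℝ) (hb : b ∈ Set.Ioo (0 : ℝ) 1)
    (hγ₁ : γ₁ ∈ Set.Icc (0 : ℝ) 1) (hγ₂ : γ₂ ∈ Set.Icc (0 : ℝ) 1) (hle : γ₁ ≤ γ₂) :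
    2 / 27 * (b ^ 4 * (γ₂ - γ₁)) ≤ dtnF b γ₁ - dtnF b γ₂ := by
  obtain ⟨hb0, hb1⟩ := hb
  obtain ⟨hg10, hg11⟩ := hγ₁
  obtain ⟨hg20, hg21⟩ := hγ₂
  have hpi := Real.pi_pos
  have hdg : (0:ℝ) ≤ γ₂ - γ₁ := by linarith only [hle]
  have hb2 : b ^ 2 ≤ 1 := by nlinarith only [hb0, hb1]
  have hb4 : b ^ 4 ≤ b ^ 2 := by
    have h := mul_nonneg (sq_nonneg b) (sub_nonneg.2 hb2)
    nlinarith only [h]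
  set x₁ := b * Real.sqrt γ₁ with hx₁
  set x₂ := b * Real.sqrt γ₂ with hx₂
  have hx1sq : x₁ ^ 2 = b ^ 2 * γ₁ := by rw [hx₁, mul_pow, Real.sq_sqrt hg10]
  have hx2sq : x₂ ^ 2 = b ^ 2 * γ₂ := by rw [hx₂, mul_pow, Real.sq_sqrt hg20]
  have hu1 : 0 ≤ b ^ 2 * γ₁ := by positivity
  have hu2 : 0 ≤ b ^ 2 * γ₂ := by positivity
  have hu1le : b ^ 2 * γ₁ ≤ 1 := by
    have := mul_le_mul_of_nonneg_left hg11 (sq_nonneg b)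
    linarith only [this, hb2]
  have hu2le : b ^ 2 * γ₂ ≤ 1 := by
    have := mul_le_mul_of_nonneg_left hg21 (sq_nonneg b)
    linarith only [this, hb2]
  have hx1le : x₁ ^ 2 ≤ 1 := by rw [hx1sq]; exact hu1le
  have hx2le : x₂ ^ 2 ≤ 1 := by rw [hx2sq]; exact hu2le
  -- the four integrals
  set A₁ := ∫ t in (-1:ℝ)..1, Real.cos (x₁ * t) * (Real.sqrt (1 - t ^ 2))⁻¹ with hA₁
  set A₂ := ∫ t in (-1:ℝ)..1, Real.cos (x₂ * t) * (Real.sqrt (1 - t ^ 2))⁻¹ with hA₂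
  set C₁ := ∫ t in (-1:ℝ)..1, Real.cos (x₁ * t) * ((1 - t ^ 2) * Real.sqrt (1 - t ^ 2)) with hC₁
  set C₂ := ∫ t in (-1:ℝ)..1, Real.cos (x₂ * t) * ((1 - t ^ 2) * Real.sqrt (1 - t ^ 2)) with hC₂
  have hA1ge : 3 * π / 4 ≤ A₁ := I0_ge hx1le
  have hA2ge : 3 * π / 4 ≤ A₂ := I0_ge hx2le
  have hA1le : A₁ ≤ π := I0_le x₁
  have hA2le : A₂ ≤ π := I0_le x₂
  have hC1ge : 3 * π / 8 - π / 32 ≤ C₁ := I2_ge hx1le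
  have hC2ge : 3 * π / 8 - π / 32 ≤ C₂ := I2_ge hx2le
  have hC1le : C₁ ≤ 3 * π / 8 := I2_le x₁
  have hC2le : C₂ ≤ 3 * π / 8 := I2_le x₂
  have hC1nn : (0:ℝ) ≤ C₁ := by linarith only [hC1ge, hpi]
  have hC2nn : (0:ℝ) ≤ C₂ := by linarith only [hC2ge, hpi]
  have habs : |x₂ ^ 2 - x₁ ^ 2| = b ^ 2 * (γ₂ - γ₁) := by
    rw [hx1sq, hx2sq, abs_of_nonneg (by nlinarith only [mul_nonneg (sq_nonneg b) hdg])]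
    ring
  have habs' : |x₁ ^ 2 - x₂ ^ 2| = b ^ 2 * (γ₂ - γ₁) := by
    rw [← habs, abs_sub_comm]
  -- difference bounds
  have hAdiff : A₂ - b ^ 2 * (γ₂ - γ₁) / 2 * (π / 2) ≤ A₁ := by
    have := integral_cos_diff_bound (w := fun t => (Real.sqrt (1 - t ^ 2))⁻¹)
      (fun t _ => w0_nonneg t) integrable_cos_w0 integrable_t2_w0 x₂ x₁
    rw [intT2W0, habs] at this
    linarith only [this]
  have hCdiff : C₁ - b ^ 2 * (γ₂ - γ₁) / 2 * (π / 16) ≤ C₂ := by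
    have := integral_cos_diff_bound (w := fun t => (1 - t ^ 2) * Real.sqrt (1 - t ^ 2))
      (fun t ht => w2_nonneg ht) integrable_cos_w2 integrable_t2_w2 x₁ x₂
    rw [intT2W2, habs'] at this
    linarith only [this]
  -- Bessel values
  set N₁ := besselJ 0 x₁ with hN₁
  set N₂ := besselJ 0 x₂ with hN₂
  set M₁ := b ^ 2 * besselJ 2 x₁ with hM₁
  set M₂ := b ^ 2 * besselJ 2 x₂ with hM₂
  have hNA1 : N₁ = A₁ / π := by rw [hN₁, besselJ_zero_eq]
  have hNA2 : N₂ = A₂ / π := by rw [hN₂, besselJ_zero_eq]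
  have hMC1 : M₁ = b ^ 2 * (b ^ 2 * γ₁) * C₁ / (3 * π) := by
    rw [hM₁, besselJ_two_eq, hx1sq]; ring
  have hMC2 : M₂ = b ^ 2 * (b ^ 2 * γ₂) * C₂ / (3 * π) := by
    rw [hM₂, besselJ_two_eq, hx2sq]; ring
  -- numeric bounds
  have hN1ge : (3:ℝ)/4 ≤ N₁ := by
    rw [hNA1, le_div_iff₀ hpi]; linarith only [hA1ge]
  have hN2ge : (3:ℝ)/4 ≤ N₂ := by
    rw [hNA2, le_div_iff₀ hpi]; linarith only [hA2ge]
  have hN1le : N₁ ≤ 1 := by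
    rw [hNA1, div_le_one hpi]; linarith only [hA1le]
  have hN2le : N₂ ≤ 1 := by
    rw [hNA2, div_le_one hpi]; linarith only [hA2le]
  have hM1ge : 0 ≤ M₁ := by
    rw [hMC1]
    exact div_nonneg (mul_nonneg (by positivity) hC1nn) (by positivity)
  have hM2ge : 0 ≤ M₂ := by
    rw [hMC2]
    exact div_nonneg (mul_nonneg (by positivity) hC2nn) (by positivity)
  have hM1le : M₁ ≤ b ^ 2 / 8 := by
    rw [hMC1, div_le_div_iff₀ (by positivity) (by norm_num : (0:ℝ) < 8)]
    have s1 : b ^ 2 * (b ^ 2 * γ₁) * C₁ ≤ b ^ 2 * (b ^ 2 * γ₁) * (3 * π / 8) :=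
      mul_le_mul_of_nonneg_left hC1le (by positivity)
    have s2 : b ^ 2 * (b ^ 2 * γ₁) * (3 * π / 8) ≤ b ^ 2 * 1 * (3 * π / 8) :=
      mul_le_mul_of_nonneg_right (mul_le_mul_of_nonneg_left hu1le (sq_nonneg b))
        (by positivity)
    nlinarith only [s1, s2]
  have hM2le : M₂ ≤ b ^ 2 / 8 := by
    rw [hMC2, div_le_div_iff₀ (by positivity) (by norm_num : (0:ℝ) < 8)]
    have s1 : b ^ 2 * (b ^ 2 * γ₂) * C₂ ≤ b ^ 2 * (b ^ 2 * γ₂) * (3 * π / 8) :=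
      mul_le_mul_of_nonneg_left hC2le (by positivity)
    have s2 : b ^ 2 * (b ^ 2 * γ₂) * (3 * π / 8) ≤ b ^ 2 * 1 * (3 * π / 8) :=
      mul_le_mul_of_nonneg_right (mul_le_mul_of_nonneg_left hu2le (sq_nonneg b))
        (by positivity)
    nlinarith only [s1, s2]
  have hNd : -(b ^ 2 * (γ₂ - γ₁) / 4) ≤ N₁ - N₂ := by
    rw [hNA1, hNA2, div_sub_div_same, le_div_iff₀ hpi]
    nlinarith only [hAdiff]
  have hMd : 5 / 48 * (b ^ 4 * (γ₂ - γ₁)) ≤ M₂ - M₁ := by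
    rw [hMC2, hMC1, div_sub_div_same, le_div_iff₀ (by positivity : (0:ℝ) < 3 * π)]
    have h1 : -(b ^ 2 * (γ₂ - γ₁) * π / 32) ≤ b ^ 2 * γ₂ * (C₂ - C₁) := by
      rcases le_or_gt 0 (C₂ - C₁) with h | h
      · have w1 := mul_nonneg hu2 h
        have w2 := mul_nonneg (mul_nonneg (sq_nonneg b) hdg) hpi.le
        nlinarith only [w1, w2]
      · have w := mul_le_mul_of_nonneg_right hu2le (neg_nonneg.2 h.le)
        nlinarith only [w, hCdiff]
    have h2 : b ^ 2 * (γ₂ - γ₁) * (3 * π / 8 - π / 32) ≤ (b ^ 2 * γ₂ - b ^ 2 * γ₁) * C₁ := by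
      have w := mul_le_mul_of_nonneg_left hC1ge (mul_nonneg (sq_nonneg b) hdg)
      nlinarith only [w]
    have w := mul_le_mul_of_nonneg_left (add_le_add h1 h2) (sq_nonneg b)
    nlinarith only [w]
  -- final arithmetic
  have hdt1 : dtnF b γ₁ = (N₁ - M₁) / (N₁ + M₁) := by
    rw [hN₁, hM₁, hx₁]; rfl
  have hdt2 : dtnF b γ₂ = (N₂ - M₂) / (N₂ + M₂) := by
    rw [hN₂, hM₂, hx₂]; rfl
  rw [hdt1, hdt2]
  have hD1 : (0:ℝ) < N₁ + M₁ := by linarith only [hN1ge, hM1ge]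
  have hD2 : (0:ℝ) < N₂ + M₂ := by linarith only [hN2ge, hM2ge]
  have hD1le : N₁ + M₁ ≤ 9/8 := by linarith only [hN1le, hM1le, hb2]
  have hD2le : N₂ + M₂ ≤ 9/8 := by linarith only [hN2le, hM2le, hb2]
  have hK : 3 / 64 * (b ^ 4 * (γ₂ - γ₁)) ≤ N₁ * M₂ - N₂ * M₁ := by
    have e1 : 3 / 4 * (5 / 48 * (b ^ 4 * (γ₂ - γ₁))) ≤ N₁ * (M₂ - M₁) := by
      have q := mul_le_mul_of_nonneg_right hN1ge
        (by positivity : (0:ℝ) ≤ 5 / 48 * (b ^ 4 * (γ₂ - γ₁)))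
      have r := mul_le_mul_of_nonneg_left hMd
        (by linarith only [hN1ge] : (0:ℝ) ≤ N₁)
      nlinarith only [q, r]
    have e2 : -(b ^ 2 / 8 * (b ^ 2 * (γ₂ - γ₁) / 4)) ≤ M₁ * (N₁ - N₂) := by
      rcases le_or_gt 0 (N₁ - N₂) with h | h
      · have w1 := mul_nonneg hM1ge h
        have w2 : (0:ℝ) ≤ b ^ 2 / 8 * (b ^ 2 * (γ₂ - γ₁) / 4) := by positivity
        nlinarith only [w1, w2]
      · have u1 := mul_le_mul_of_nonneg_right hM1le (neg_nonneg.2 h.le)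
        have u2 := mul_le_mul_of_nonneg_left hNd (by positivity : (0:ℝ) ≤ b ^ 2 / 8)
        nlinarith only [u1, u2]
    nlinarith only [e1, e2]
  have hsplit : (N₁ - M₁) / (N₁ + M₁) - (N₂ - M₂) / (N₂ + M₂)
      = 2 * (N₁ * M₂ - N₂ * M₁) / ((N₁ + M₁) * (N₂ + M₂)) := by
    rw [div_sub_div _ _ (ne_of_gt hD1) (ne_of_gt hD2)]
    congr 1
    ring
  rw [hsplit, le_div_iff₀ (by positivity)]
  have hDD : (N₁ + M₁) * (N₂ + M₂) ≤ 81/64 :=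
    le_trans (mul_le_mul hD1le hD2le hD2.le (by norm_num)) (by norm_num)
  have t1 := mul_le_mul_of_nonneg_left hDD
    (by positivity : (0:ℝ) ≤ 2 / 27 * (b ^ 4 * (γ₂ - γ₁)))
  nlinarith only [t1, hK]

theorem lipschitz_stability_fixed_radius (b γ₁ γ₂ : ℝ) (hb : b ∈ Set.Ioo (0 : ℝ) 1)
    (hγ₁ : γ₁ ∈ Set.Icc (0 : ℝ) 1) (hγ₂ : γ₂ ∈ Set.Icc (0 : ℝ) 1) :
    0.04205 * b ^ 4 * |γ₁ - γ₂| ≤ |dtnF b γ₁ - dtnF b γ₂| ∧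
      |γ₁ - γ₂| ≤ (4.8765) ^ 2 / b ^ 4 * |dtnF b γ₁ - dtnF b γ₂| := by
  have hb0 : 0 < b := hb.1
  have hb4 : (0:ℝ) < b ^ 4 := by positivity
  rcases le_total γ₁ γ₂ with h | h
  · have hk := key_estimate b γ₁ γ₂ hb hγ₁ hγ₂ h
    have hX : (0:ℝ) ≤ b ^ 4 * (γ₂ - γ₁) :=
      mul_nonneg (by positivity) (sub_nonneg.2 h)
    have h0 : (0:ℝ) ≤ 2 / 27 * (b ^ 4 * (γ₂ - γ₁)) := by linarith only [hX]
    have hF0 : (0:ℝ) ≤ dtnF b γ₁ - dtnF b γ₂ := le_trans h0 hk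
    have habsF : |dtnF b γ₁ - dtnF b γ₂| = dtnF b γ₁ - dtnF b γ₂ := abs_of_nonneg hF0
    have habsg : |γ₁ - γ₂| = γ₂ - γ₁ := by
      rw [abs_sub_comm, abs_of_nonneg (sub_nonneg.2 h)]
    constructor
    · rw [habsF, habsg]
      nlinarith only [hk, hX]
    · rw [habsF, habsg, div_mul_eq_mul_div, le_div_iff₀ hb4]
      nlinarith only [hk, hF0]
  · have hk := key_estimate b γ₂ γ₁ hb hγ₂ hγ₁ h
    have hX : (0:ℝ) ≤ b ^ 4 * (γ₁ - γ₂) :=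
      mul_nonneg (by positivity) (sub_nonneg.2 h)
    have h0 : (0:ℝ) ≤ 2 / 27 * (b ^ 4 * (γ₁ - γ₂)) := by linarith only [hX]
    have hF0 : (0:ℝ) ≤ dtnF b γ₂ - dtnF b γ₁ := le_trans h0 hk
    have habsF : |dtnF b γ₁ - dtnF b γ₂| = dtnF b γ₂ - dtnF b γ₁ := by
      rw [abs_sub_comm, abs_of_nonneg hF0]
    have habsg : |γ₁ - γ₂| = γ₁ - γ₂ := abs_of_nonneg (sub_nonneg.2 h)
    constructor
    · rw [habsF, habsg]
      nlinarith only [hk, hX]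
    · rw [habsF, habsg, div_mul_eq_mul_div, le_div_iff₀ hb4]
      nlinarith only [hk, hF0]
end

section
/- Let γ ∈ (0,1] and b_1, b_2 ∈ (0,1), and set b = min{b_1, b_2}. Then |b_1 − b_2| ≤ (15 / (2 γ b³)) · |F(b_1,γ) − F(b_2,γ)|. Since |F(b_1,γ) − F(b_2,γ)| is a lower bound for ‖Λ_{q_1} − Λ_{q_2}‖ for the one-step potentials q_i = γ χ_{(0,b_i)}(|x|), this gives Lipschitz stability of the discontinuity radius with respect to the DtN map when the height γ is fixed and b_1, b_2 ≥ b_0 > 0. -/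
open Real Set

namespace BesselAux

set_option maxHeartbeats 2000000

open MeasureTheory intervalIntegral

/-- The weight `(1-t²)^c` appearing in the Poisson integral representation. -/
noncomputable def wgt (c t : ℝ) : ℝ := (1 - t ^ 2) ^ c

lemma wgt_nonneg {c t : ℝ} (ht : t ∈ Icc (-1:ℝ) 1) : 0 ≤ wgt c t := by
  have : (0:ℝ) ≤ 1 - t^2 := by nlinarith [ht.1, ht.2]
  exact Real.rpow_nonneg this c

lemma wgt_meas (c : ℝ) : Measurable (wgt c) := by
  unfold wgt; fun_prop

lemma contWgt {c : ℝ} (hc : 0 < c) : Continuous fun t : ℝ => wgt c t := by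
  rw [continuous_iff_continuousAt]
  intro t
  exact (Real.continuousAt_rpow_const _ _ (Or.inr hc.le)).comp (by fun_prop)

lemma intgWpos {c : ℝ} (hc : 0 < c) : IntervalIntegrable (wgt c) volume (-1) 1 :=
  (contWgt hc).intervalIntegrable _ _

/-- Integrability of the singular weight `(1-t²)^{-1/2}`. -/
lemma intgW0 : IntervalIntegrable (wgt (-(1:ℝ)/2)) volume (-1) 1 := by
  have base : IntervalIntegrable (fun x : ℝ => x ^ (-(1:ℝ)/2)) volume 0 1 :=
    intervalIntegrable_rpow' (by norm_num)
  have h1 : IntervalIntegrable (fun x : ℝ => (1 - x) ^ (-(1:ℝ)/2)) volume 0 1 := by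
    have := base.comp_sub_left 1
    simpa using this.symm
  have half : IntervalIntegrable (wgt (-(1:ℝ)/2)) volume 0 1 := by
    apply h1.mono_fun ((wgt_meas _).aestronglyMeasurable)
    filter_upwards [ae_restrict_mem measurableSet_uIoc] with t ht
    rw [Set.uIoc_of_le (by norm_num : (0:ℝ) ≤ 1)] at ht
    have ht0 : 0 < t := ht.1
    have ht1 : t ≤ 1 := ht.2
    have h1t : (0:ℝ) ≤ 1 - t := by linarith
    have h1t' : (0:ℝ) ≤ 1 + t := by linarith
    have key : wgt (-(1:ℝ)/2) t = (1-t) ^ (-(1:ℝ)/2) * (1+t) ^ (-(1:ℝ)/2) := by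
      rw [wgt, show (1 - t^2) = (1-t)*(1+t) by ring, Real.mul_rpow h1t h1t']
    rw [key]
    rw [Real.norm_eq_abs, Real.norm_eq_abs, abs_of_nonneg (Real.rpow_nonneg h1t _),
      abs_of_nonneg (mul_nonneg (Real.rpow_nonneg h1t _) (Real.rpow_nonneg h1t' _))]
    have : (1+t) ^ (-(1:ℝ)/2) ≤ 1 :=
      Real.rpow_le_one_of_one_le_of_nonpos (by linarith) (by norm_num)
    nlinarith [Real.rpow_nonneg h1t (-(1:ℝ)/2), Real.rpow_nonneg h1t' (-(1:ℝ)/2)]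
  have neg : IntervalIntegrable (wgt (-(1:ℝ)/2)) volume (-1) 0 := by
    have := ((IntervalIntegrable.iff_comp_neg).mp half)
    simp only [neg_zero, neg_neg] at this
    have heq : (fun x : ℝ => wgt (-(1:ℝ)/2) (-x)) = wgt (-(1:ℝ)/2) := by
      funext x; simp [wgt]
    rw [heq] at this
    exact this.symm
  exact neg.trans half

/-- Pointwise identity `t² (1-t²)^c = (1-t²)^c - (1-t²)^{c+1}` on `[-1,1]`. -/
lemma wgt_id' {c d : ℝ} (hc : c ≠ 0) (hd : d = c + 1) (hd0 : d ≠ 0) {t : ℝ}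
    (ht : t ∈ Icc (-1:ℝ) 1) : t ^ 2 * wgt c t = wgt c t - wgt d t := by
  subst hd
  have h0 : (0:ℝ) ≤ 1 - t^2 := by nlinarith [ht.1, ht.2]
  rcases eq_or_lt_of_le h0 with h | h
  · simp only [wgt, ← h, Real.zero_rpow hc, Real.zero_rpow hd0]
    nlinarith
  · unfold wgt
    rw [Real.rpow_add h, Real.rpow_one]
    ring

lemma S0 : ∫ t in (-1:ℝ)..1, wgt (-(1:ℝ)/2) t = π := by
  have hder : ∀ t ∈ Ioo (-1:ℝ) 1,
      HasDerivWithinAt Real.arcsin (wgt (-(1:ℝ)/2) t) (Ioi t) t := by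
    intro t ht
    have hne1 : t ≠ -1 := fun h => by rw [h] at ht; exact absurd ht.1 (by norm_num)
    have hne2 : t ≠ 1 := fun h => by rw [h] at ht; exact absurd ht.2 (by norm_num)
    have h := Real.hasDerivAt_arcsin hne1 hne2
    have h0 : (0:ℝ) < 1 - t^2 := by
      rcases ht with ⟨h1, h2⟩; nlinarith
    have he : wgt (-(1:ℝ)/2) t = 1 / Real.sqrt (1 - t^2) := by
      rw [wgt, show (-(1:ℝ)/2) = -(1/2) by norm_num, Real.rpow_neg h0.le,
        ← Real.sqrt_eq_rpow, one_div]
    rw [he]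
    exact h.hasDerivWithinAt
  have := integral_eq_sub_of_hasDeriv_right_of_le (by norm_num : (-1:ℝ) ≤ 1)
    (Real.continuous_arcsin.continuousOn) hder intgW0
  rw [this, Real.arcsin_one, Real.arcsin_neg_one]
  ring

lemma S1 : ∫ t in (-1:ℝ)..1, wgt ((1:ℝ)/2) t = π/2 := by
  rw [← integral_sqrt_one_sub_sq]
  apply integral_congr
  intro t _
  exact (Real.sqrt_eq_rpow _).symm

lemma ftc_wgt {c : ℝ} (hc : 1 < c) :
    (∫ t in (-1:ℝ)..1, wgt c t) = (2*c) * ∫ t in (-1:ℝ)..1, t^2 * wgt (c-1) t := by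
  have hder : ∀ t ∈ uIcc (-1:ℝ) 1, HasDerivAt (fun u : ℝ => u * wgt c u)
      (wgt c t - 2*c*(t^2 * wgt (c-1) t)) t := by
    intro t _
    have hin : HasDerivAt (fun u : ℝ => 1 - u^2) (-(2*t)) t := by
      simpa using ((hasDerivAt_pow 2 t).const_sub 1)
    have hr : HasDerivAt (fun u : ℝ => wgt c u) (-(2*t) * c * (1-t^2)^(c-1)) t := by
      unfold wgt
      exact hin.rpow_const (Or.inr hc.le)
    have : HasDerivAt (fun u : ℝ => u * wgt c u)
        (1 * wgt c t + id t * (-(2*t) * c * (1-t^2)^(c-1))) t := (hasDerivAt_id t).mul hr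
    convert this using 1
    unfold wgt
    simp only [id_eq]
    ring
  have hint : IntervalIntegrable (fun t => wgt c t - 2*c*(t^2 * wgt (c-1) t)) volume (-1) 1 := by
    apply ((intgWpos (by linarith)).sub _)
    apply IntervalIntegrable.const_mul
    exact ((continuous_pow 2).mul (contWgt (by linarith))).intervalIntegrable _ _
  have h0 := integral_eq_sub_of_hasDerivAt hder hint
  have hsplit := integral_sub (intgWpos (by linarith : (0:ℝ) < c))
    (((continuous_pow 2).mul (contWgt (by linarith : (0:ℝ) < c - 1))).intervalIntegrable
      (-1) 1 |>.const_mul (2*c))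
  simp only [Pi.mul_apply] at hsplit
  rw [hsplit] at h0
  have : wgt c 1 = 0 ∧ wgt c (-1) = 0 := by
    constructor <;> · rw [wgt]; norm_num; exact Real.zero_rpow (by linarith)
  rw [intervalIntegral.integral_const_mul] at h0
  nlinarith [h0, this.1, this.2]

lemma T_int {c d : ℝ} (hc : c ≠ 0) (hd : d = c + 1) (hd0 : d ≠ 0)
    (hi : IntervalIntegrable (wgt c) volume (-1) 1)
    (hi' : IntervalIntegrable (wgt d) volume (-1) 1) :
    ∫ t in (-1:ℝ)..1, t^2 * wgt c t
      = (∫ t in (-1:ℝ)..1, wgt c t) - ∫ t in (-1:ℝ)..1, wgt d t := by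
  rw [← integral_sub hi hi']
  apply integral_congr
  intro t ht
  rw [uIcc_of_le (by norm_num : (-1:ℝ) ≤ 1)] at ht
  exact wgt_id' hc hd hd0 ht

lemma S3 : ∫ t in (-1:ℝ)..1, wgt ((3:ℝ)/2) t = 3*π/8 := by
  have h := ftc_wgt (c := 3/2) (by norm_num)
  rw [show (3:ℝ)/2 - 1 = 1/2 by norm_num] at h
  rw [T_int (by norm_num) (by norm_num : (3:ℝ)/2 = 1/2 + 1) (by norm_num)
    (intgWpos (by norm_num)) (intgWpos (by norm_num)), S1] at h
  linarith

lemma T0 : ∫ t in (-1:ℝ)..1, t^2 * wgt (-(1:ℝ)/2) t = π/2 := by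
  rw [T_int (by norm_num) (by norm_num : (1:ℝ)/2 = -(1:ℝ)/2 + 1) (by norm_num)
    intgW0 (intgWpos (by norm_num)), S0, S1]
  ring

lemma T3 : ∫ t in (-1:ℝ)..1, t^2 * wgt ((3:ℝ)/2) t = π/16 := by
  have h := ftc_wgt (c := 5/2) (by norm_num)
  rw [show (5:ℝ)/2 - 1 = 3/2 by norm_num] at h
  have h2 := T_int (by norm_num) (by norm_num : (5:ℝ)/2 = 3/2 + 1) (by norm_num)
    (intgWpos (by norm_num)) (intgWpos (by norm_num))
  rw [h2, S3] at h ⊢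
  linarith

lemma cos_lip (a b : ℝ) : |Real.cos a - Real.cos b| ≤ |a - b| := by
  rw [Real.cos_sub_cos]
  have h1 : |Real.sin ((a+b)/2)| ≤ 1 := abs_le.2 ⟨Real.neg_one_le_sin _, Real.sin_le_one _⟩
  have h2 : |Real.sin ((a-b)/2)| ≤ |(a-b)/2| := Real.abs_sin_le_abs
  rw [abs_mul, abs_mul]
  have : |(a-b)/2| = |a-b|/2 := by rw [abs_div]; norm_num
  rw [this] at h2
  have := abs_nonneg (Real.sin ((a+b)/2))
  have := abs_nonneg (Real.sin ((a-b)/2))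
  have hn : |(-2:ℝ)| = 2 := by norm_num
  rw [hn]
  nlinarith [abs_nonneg (a-b)]

lemma intgMulW {c : ℝ} (hw : IntervalIntegrable (wgt c) volume (-1) 1) {f : ℝ → ℝ}
    (hf : Measurable f) (hb : ∀ t ∈ Icc (-1:ℝ) 1, |f t| ≤ 1) :
    IntervalIntegrable (fun t => f t * wgt c t) volume (-1) 1 := by
  apply hw.mono_fun (by exact (hf.mul (wgt_meas c)).aestronglyMeasurable)
  filter_upwards [ae_restrict_mem measurableSet_uIoc] with t ht
  rw [Set.uIoc_of_le (by norm_num : (-1:ℝ) ≤ 1)] at ht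
  have ht' : t ∈ Icc (-1:ℝ) 1 := ⟨ht.1.le, ht.2⟩
  rw [Real.norm_eq_abs, Real.norm_eq_abs, abs_mul]
  nlinarith [hb t ht', abs_nonneg (wgt c t), abs_nonneg (f t), le_abs_self (wgt c t)]

lemma intgCosW {c : ℝ} (hw : IntervalIntegrable (wgt c) volume (-1) 1) (r : ℝ) :
    IntervalIntegrable (fun t => Real.cos (r*t) * wgt c t) volume (-1) 1 :=
  intgMulW hw (by fun_prop) (fun t _ => abs_le.2 ⟨Real.neg_one_le_cos _, Real.cos_le_one _⟩)

lemma intgSqW {c : ℝ} (hw : IntervalIntegrable (wgt c) volume (-1) 1) :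
    IntervalIntegrable (fun t => t^2 * wgt c t) volume (-1) 1 :=
  intgMulW hw (by fun_prop) fun t ht => by
    rw [abs_pow]
    nlinarith [abs_nonneg t, (abs_le.2 ⟨ht.1, ht.2⟩ : |t| ≤ 1)]

lemma CI_le {c : ℝ} (hw : IntervalIntegrable (wgt c) volume (-1) 1) (r : ℝ) :
    (∫ t in (-1:ℝ)..1, Real.cos (r*t) * wgt c t) ≤ ∫ t in (-1:ℝ)..1, wgt c t := by
  apply integral_mono_on (by norm_num) (intgCosW hw r) hw
  intro t ht
  nlinarith [wgt_nonneg (c := c) ht, Real.cos_le_one (r*t)]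

lemma CI_ge {c : ℝ} (hw : IntervalIntegrable (wgt c) volume (-1) 1) (r : ℝ) :
    (∫ t in (-1:ℝ)..1, wgt c t) - r^2/2 * (∫ t in (-1:ℝ)..1, t^2 * wgt c t)
      ≤ ∫ t in (-1:ℝ)..1, Real.cos (r*t) * wgt c t := by
  have hi : IntervalIntegrable (fun t => wgt c t - r^2/2 * (t^2 * wgt c t)) volume (-1) 1 :=
    hw.sub ((intgSqW hw).const_mul _)
  have := integral_mono_on (by norm_num : (-1:ℝ) ≤ 1) hi (intgCosW hw r) (fun t ht => by
    have h1 : 1 - (r*t)^2/2 ≤ Real.cos (r*t) := Real.one_sub_sq_div_two_le_cos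
    nlinarith [wgt_nonneg (c := c) ht])
  rw [integral_sub hw ((intgSqW hw).const_mul _), intervalIntegral.integral_const_mul] at this
  linarith

lemma CI_lip {c : ℝ} (hw : IntervalIntegrable (wgt c) volume (-1) 1) (x y : ℝ) :
    |(∫ t in (-1:ℝ)..1, Real.cos (x*t) * wgt c t)
      - ∫ t in (-1:ℝ)..1, Real.cos (y*t) * wgt c t|
      ≤ |x - y| * ∫ t in (-1:ℝ)..1, wgt c t := by
  rw [← integral_sub (intgCosW hw x) (intgCosW hw y)]
  calc |∫ t in (-1:ℝ)..1, (Real.cos (x*t) * wgt c t - Real.cos (y*t) * wgt c t)|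
      ≤ ∫ t in (-1:ℝ)..1, |Real.cos (x*t) * wgt c t - Real.cos (y*t) * wgt c t| :=
        abs_integral_le_integral_abs (by norm_num)
    _ ≤ ∫ t in (-1:ℝ)..1, |x - y| * wgt c t := by
        apply integral_mono_on (by norm_num)
          ((intgCosW hw x).sub (intgCosW hw y)).abs (hw.const_mul _)
        intro t ht
        have h1 : |Real.cos (x*t) * wgt c t - Real.cos (y*t) * wgt c t|
            = |Real.cos (x*t) - Real.cos (y*t)| * |wgt c t| := by
          rw [← abs_mul]; ring_nf
        rw [h1, abs_of_nonneg (wgt_nonneg (c := c) ht)]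
        have h2 : |Real.cos (x*t) - Real.cos (y*t)| ≤ |x - y| * |t| := by
          have := cos_lip (x*t) (y*t)
          calc |Real.cos (x*t) - Real.cos (y*t)| ≤ |x*t - y*t| := this
            _ = |x - y| * |t| := by rw [← abs_mul]; ring_nf
        have ht1 : |t| ≤ 1 := abs_le.2 ⟨ht.1, ht.2⟩
        nlinarith [wgt_nonneg (c := c) ht, abs_nonneg (x - y), abs_nonneg t,
          mul_le_mul_of_nonneg_left ht1 (abs_nonneg (x-y))]
    _ = |x - y| * ∫ t in (-1:ℝ)..1, wgt c t := integral_const_mul _ _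

lemma besselJ0_eq (r : ℝ) :
    besselJ 0 r = (1/π) * ∫ t in (-1:ℝ)..1, Real.cos (r*t) * wgt (-(1:ℝ)/2) t := by
  unfold besselJ wgt
  rw [show (((0:ℕ):ℝ) + 1/2) = 1/2 by norm_num, Real.Gamma_one_half_eq,
    show (((0:ℕ):ℝ) - 1/2) = -(1:ℝ)/2 by norm_num]
  have h : (2:ℝ)^(0:ℕ) * Real.sqrt π * Real.sqrt π = π := by
    have := Real.mul_self_sqrt Real.pi_nonneg
    nlinarith
  rw [h]
  norm_num

lemma Gamma_five_half : Real.Gamma ((2:ℝ) + 1/2) = 3/4 * Real.sqrt π := by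
  rw [show ((2:ℝ) + 1/2) = 3/2 + 1 by norm_num, Real.Gamma_add_one (by norm_num),
    show ((3:ℝ)/2) = 1/2 + 1 by norm_num, Real.Gamma_add_one (by norm_num),
    Real.Gamma_one_half_eq]
  ring

lemma besselJ2_eq (r : ℝ) :
    besselJ 2 r = r^2/(3*π) * ∫ t in (-1:ℝ)..1, Real.cos (r*t) * wgt ((3:ℝ)/2) t := by
  unfold besselJ wgt
  rw [show (((2:ℕ):ℝ) + 1/2) = (2:ℝ) + 1/2 by norm_num, Gamma_five_half]
  rw [show (((2:ℕ):ℝ) - 1/2) = (3:ℝ)/2 by norm_num]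
  have h : (2:ℝ)^(2:ℕ) * (3/4 * Real.sqrt π) * Real.sqrt π = 3*π := by
    have := Real.mul_self_sqrt Real.pi_nonneg
    nlinarith
  rw [h]

lemma J0_le (r : ℝ) : besselJ 0 r ≤ 1 := by
  have h := CI_le intgW0 r
  rw [S0] at h
  rw [besselJ0_eq]
  have hπ := Real.pi_pos
  rw [div_mul_eq_mul_div, one_mul, div_le_one hπ]
  exact h

lemma J0_ge (r : ℝ) : 1 - r^2/4 ≤ besselJ 0 r := by
  have h := CI_ge intgW0 r
  rw [S0, T0] at h
  rw [besselJ0_eq]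
  have hπ := Real.pi_pos
  calc (1 - r^2/4 : ℝ) = (1/π) * (π - r^2/2 * (π/2)) := by field_simp; ring
    _ ≤ _ := mul_le_mul_of_nonneg_left h (by positivity)

lemma J0_lip (x y : ℝ) : |besselJ 0 x - besselJ 0 y| ≤ |x - y| := by
  have h := CI_lip intgW0 x y
  rw [S0] at h
  rw [besselJ0_eq, besselJ0_eq, ← mul_sub, abs_mul]
  have hπ := Real.pi_pos
  rw [abs_of_nonneg (by positivity : (0:ℝ) ≤ 1/π)]
  calc 1/π * |(∫ t in (-1:ℝ)..1, Real.cos (x*t) * wgt (-(1:ℝ)/2) t)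
        - ∫ t in (-1:ℝ)..1, Real.cos (y*t) * wgt (-(1:ℝ)/2) t|
      ≤ 1/π * (|x - y| * π) := by
        apply mul_le_mul_of_nonneg_left h (by positivity)
    _ = |x - y| := by field_simp

lemma J2_le (r : ℝ) : besselJ 2 r ≤ r^2/8 := by
  have h := CI_le (intgWpos (c := 3/2) (by norm_num)) r
  rw [S3] at h
  rw [besselJ2_eq]
  have hπ := Real.pi_pos
  have hr : 0 ≤ r^2/(3*π) := by positivity
  calc r^2/(3*π) * ∫ t in (-1:ℝ)..1, Real.cos (r*t) * wgt ((3:ℝ)/2) t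
      ≤ r^2/(3*π) * (3*π/8) := mul_le_mul_of_nonneg_left h hr
    _ = r^2/8 := by field_simp

lemma J2_ge (r : ℝ) : r^2/8 - r^4/96 ≤ besselJ 2 r := by
  have h := CI_ge (intgWpos (c := 3/2) (by norm_num)) r
  rw [S3, T3] at h
  rw [besselJ2_eq]
  have hπ := Real.pi_pos
  have hr : 0 ≤ r^2/(3*π) := by positivity
  calc (r^2/8 - r^4/96 : ℝ) = r^2/(3*π) * (3*π/8 - r^2/2 * (π/16)) := by field_simp; ring
    _ ≤ r^2/(3*π) * ∫ t in (-1:ℝ)..1, Real.cos (r*t) * wgt ((3:ℝ)/2) t :=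
        mul_le_mul_of_nonneg_left h hr
    _ = _ := rfl

lemma J2_diff {x y : ℝ} (hx : 0 ≤ x) (hxy : x ≤ y) :
    (y^2 - x^2)*(1/8 - y^2/96) - x^2*(y-x)/8 ≤ besselJ 2 y - besselJ 2 x := by
  have hπ := Real.pi_pos
  set Cx := ∫ t in (-1:ℝ)..1, Real.cos (x*t) * wgt ((3:ℝ)/2) t with hCx
  set Cy := ∫ t in (-1:ℝ)..1, Real.cos (y*t) * wgt ((3:ℝ)/2) t with hCy
  have h1 : 3*π/8 - y^2/2 * (π/16) ≤ Cy := by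
    have := CI_ge (intgWpos (c := 3/2) (by norm_num)) y; rw [S3, T3] at this; exact this
  have h2 : |Cy - Cx| ≤ (y - x) * (3*π/8) := by
    have := CI_lip (intgWpos (c := 3/2) (by norm_num)) y x
    rw [S3, abs_of_nonneg (by linarith : (0:ℝ) ≤ y - x)] at this
    exact this
  have h2' : -( (y-x) * (3*π/8)) ≤ Cy - Cx := by
    have := abs_le.1 h2; linarith [this.1]
  have hrw : besselJ 2 y - besselJ 2 x
      = (1/(3*π)) * ((y^2 - x^2) * Cy + x^2 * (Cy - Cx)) := by
    rw [besselJ2_eq, besselJ2_eq, ← hCx, ← hCy]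
    field_simp
    ring
  rw [hrw]
  have hy2 : 0 ≤ y^2 - x^2 := by nlinarith
  have hA : (y^2 - x^2) * (3*π/8 - y^2/2 * (π/16)) ≤ (y^2 - x^2) * Cy :=
    mul_le_mul_of_nonneg_left h1 hy2
  have hB : x^2 * (-((y-x) * (3*π/8))) ≤ x^2 * (Cy - Cx) :=
    mul_le_mul_of_nonneg_left h2' (sq_nonneg x)
  have hfin : (y^2 - x^2)*(1/8 - y^2/96) - x^2*(y-x)/8
      = (1/(3*π)) * ((y^2-x^2)*(3*π/8 - y^2/2*(π/16)) + x^2 * (-((y-x)*(3*π/8)))) := by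
    field_simp
    ring
  rw [hfin]
  apply mul_le_mul_of_nonneg_left _ (by positivity)
  linarith

section minis
variable {s b₁ b₂ J01 J02 J21 J22 : ℝ}

lemma mini1 {v J : ℝ} (hv0 : 0 ≤ v) (hv1 : v ≤ 1) (h : v^2/8 - v^4/96 ≤ J) :
    v^2*(11/96) ≤ J := by
  nlinarith [mul_nonneg (sq_nonneg v) (by nlinarith : (0:ℝ) ≤ 1 - v^2)]

lemma mini2 {u v J21 J22 : ℝ} (hu0 : 0 ≤ u) (huv : u ≤ v) (hv1 : v ≤ 1)
    (h : (v^2 - u^2)*(1/8 - v^2/96) - u^2*(v-u)/8 ≤ J22 - J21) :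
    (v^2 - u^2)*(11/96) - u^2*(v-u)/8 ≤ J22 - J21 := by
  have h1 : 0 ≤ v^2 - u^2 := by nlinarith
  nlinarith [mul_nonneg h1 (by nlinarith : (0:ℝ) ≤ 1/96 - v^2/96)]

lemma mini3 (hs0 : 0 < s) (hs1 : s ≤ 1) (hb₁0 : 0 < b₁) (h12 : b₁ ≤ b₂) (hb₂1 : b₂ ≤ 1)
    (hfd : ((b₂*s)^2 - (b₁*s)^2)*(11/96) - (b₁*s)^2*(b₂*s-b₁*s)/8 ≤ J22 - J21)
    (hJ22l : (b₂*s)^2*(11/96) ≤ J22) :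
    s^2*b₁^3*(b₂-b₁)/3 ≤ b₂^2*J22 - b₁^2*J21 := by
  have hb₂0 : 0 < b₂ := lt_of_lt_of_le hb₁0 h12
  have hδ : 0 ≤ b₂ - b₁ := sub_nonneg.2 h12
  have h4 : 4*b₁^3*(b₂-b₁) ≤ b₂^4 - b₁^4 := by
    nlinarith [mul_nonneg (mul_nonneg hb₁0.le hb₁0.le) hδ,
      mul_nonneg (mul_nonneg hb₂0.le hb₂0.le) hδ,
      mul_nonneg (mul_nonneg hb₁0.le hb₂0.le) hδ]
  have hsb : s*b₁ ≤ 1 := by nlinarith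
  have h5 : s^3*b₁^4*(b₂-b₁) ≤ s^2*b₁^3*(b₂-b₁) := by
    nlinarith [mul_nonneg (mul_nonneg (mul_nonneg (sq_nonneg s) (pow_nonneg hb₁0.le 3)) hδ)
      (sub_nonneg.2 hsb)]
  have step1 := mul_le_mul_of_nonneg_left hfd (sq_nonneg b₁)
  have h1 : 0 ≤ b₂^2 - b₁^2 := by nlinarith
  have step2 := mul_le_mul_of_nonneg_left hJ22l h1
  have h6 := mul_le_mul_of_nonneg_left h4 (sq_nonneg s)
  nlinarith [step1, step2, h5, h6]

lemma mini4 (hs0 : 0 < s) (hs1 : s ≤ 1) (hb₁0 : 0 < b₁) (hb₁1 : b₁ ≤ 1) (h12 : b₁ ≤ b₂)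
    (hA : s^2*b₁^3*(b₂-b₁)/3 ≤ b₂^2*J22 - b₁^2*J21)
    (f01l : 3/4 ≤ J01)
    (hA1l : 0 ≤ b₁^2*J21) (hA1u : b₁^2*J21 ≤ s^2*b₁^4/8)
    (hflip : J02 - J01 ≤ (b₂-b₁)*s) :
    s^2*b₁^3*(b₂-b₁)/8 ≤ (b₂^2*J22)*J01 - (b₁^2*J21)*J02 := by
  have hδ : 0 ≤ b₂ - b₁ := sub_nonneg.2 h12
  have hsb : s*b₁ ≤ 1 := mul_le_one₀ hs1 hb₁0.le hb₁1
  have h5 : s^3*b₁^4*(b₂-b₁) ≤ s^2*b₁^3*(b₂-b₁) := by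
    nlinarith [mul_nonneg (mul_nonneg (mul_nonneg (sq_nonneg s) (pow_nonneg hb₁0.le 3)) hδ)
      (sub_nonneg.2 hsb)]
  have e1 : s^2*b₁^3*(b₂-b₁)/3*(3/4) ≤ (b₂^2*J22 - b₁^2*J21)*J01 := by
    apply mul_le_mul hA f01l (by norm_num)
    have : 0 ≤ s^2*b₁^3*(b₂-b₁)/3 := by positivity
    linarith
  have hlow : -(s*(b₂-b₁)) ≤ J01 - J02 := by linarith
  have t1 := mul_le_mul_of_nonneg_left hlow hA1l
  have t2 : -(s^2*b₁^4/8)*(s*(b₂-b₁)) ≤ (b₁^2*J21)*(-(s*(b₂-b₁))) := by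
    nlinarith [mul_le_mul_of_nonneg_right hA1u (mul_nonneg hs0.le hδ)]
  nlinarith [e1, t1, t2, h5]

lemma mini5 (hs0 : 0 < s) (hb₁0 : 0 < b₁) (h12 : b₁ ≤ b₂)
    (hnum : s^2*b₁^3*(b₂-b₁)/8 ≤ (b₂^2*J22)*J01 - (b₁^2*J21)*J02)
    (hDD : (J01 + b₁^2*J21)*(J02 + b₂^2*J22) ≤ 81/64) :
    2*s^2*b₁^3/15*(b₂-b₁)*((J01 + b₁^2*J21)*(J02 + b₂^2*J22)) ≤
      (J01 - b₁^2*J21)*(J02 + b₂^2*J22) - (J02 - b₂^2*J22)*(J01 + b₁^2*J21) := by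
  have hδ : 0 ≤ b₂ - b₁ := sub_nonneg.2 h12
  have hc : (0:ℝ) ≤ 2*s^2*b₁^3/15*(b₂-b₁) := by positivity
  have h1 := mul_le_mul_of_nonneg_left hDD hc
  have h2 : 0 ≤ s^2*b₁^3*(b₂-b₁) := by positivity
  nlinarith [hnum, h1, h2]

lemma mini6 {d₁ d₂ : ℝ} (h1 : 0 ≤ d₁) (h2 : d₁ ≤ 9/8) (h3 : 0 ≤ d₂) (h4 : d₂ ≤ 9/8) :
    d₁ * d₂ ≤ 81/64 := by nlinarith

end minis

lemma key {γ b₁ b₂ : ℝ} (hγ0 : 0 < γ) (hγ1 : γ ≤ 1) (hb₁0 : 0 < b₁) (hb₂1 : b₂ < 1)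
    (h12 : b₁ ≤ b₂) :
    2*γ*b₁^3/15 * (b₂ - b₁) ≤ dtnF b₁ γ - dtnF b₂ γ := by
  set s := Real.sqrt γ with hs
  have hs0 : 0 < s := Real.sqrt_pos.2 hγ0
  have hs2 : s^2 = γ := Real.sq_sqrt hγ0.le
  have hs1 : s ≤ 1 := Real.sqrt_le_one.mpr hγ1
  have hb₂0 : 0 < b₂ := lt_of_lt_of_le hb₁0 h12
  have hx₁0 : (0:ℝ) ≤ b₁ * s := by positivity
  have hx12 : b₁ * s ≤ b₂ * s := mul_le_mul_of_nonneg_right h12 hs0.le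
  have hx₂1 : b₂ * s ≤ 1 := mul_le_one₀ hb₂1.le hs0.le hs1
  have hx₁1 : b₁ * s ≤ 1 := le_trans hx12 hx₂1
  have f01l : 3/4 ≤ besselJ 0 (b₁*s) := by nlinarith [J0_ge (b₁*s)]
  have f02l : 3/4 ≤ besselJ 0 (b₂*s) := by nlinarith [J0_ge (b₂*s)]
  have f01u := J0_le (b₁*s)
  have f02u := J0_le (b₂*s)
  have f21l : 0 ≤ besselJ 2 (b₁*s) := by
    nlinarith [J2_ge (b₁*s), mul_nonneg (sq_nonneg (b₁*s))
      (by nlinarith : (0:ℝ) ≤ 1 - (b₁*s)^2)]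
  have f22l : 0 ≤ besselJ 2 (b₂*s) := by
    nlinarith [J2_ge (b₂*s), mul_nonneg (sq_nonneg (b₂*s))
      (by nlinarith : (0:ℝ) ≤ 1 - (b₂*s)^2)]
  have hA1l : 0 ≤ b₁^2 * besselJ 2 (b₁*s) := mul_nonneg (sq_nonneg b₁) f21l
  have hA2l : 0 ≤ b₂^2 * besselJ 2 (b₂*s) := mul_nonneg (sq_nonneg b₂) f22l
  have hA1u : b₁^2 * besselJ 2 (b₁*s) ≤ s^2*b₁^4/8 := by
    linarith [mul_le_mul_of_nonneg_left (J2_le (b₁*s)) (sq_nonneg b₁),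
      (by ring : b₁^2 * ((b₁*s)^2/8) = s^2*b₁^4/8)]
  have hA2u : b₂^2 * besselJ 2 (b₂*s) ≤ s^2*b₂^4/8 := by
    linarith [mul_le_mul_of_nonneg_left (J2_le (b₂*s)) (sq_nonneg b₂),
      (by ring : b₂^2 * ((b₂*s)^2/8) = s^2*b₂^4/8)]
  have hb₁1 : b₁ ≤ 1 := (lt_of_le_of_lt h12 hb₂1).le
  have hA1u' : b₁^2 * besselJ 2 (b₁*s) ≤ 1/8 := by
    have hp : s^2*b₁^4 ≤ 1 :=
      mul_le_one₀ (pow_le_one₀ hs0.le hs1) (pow_nonneg hb₁0.le 4) (pow_le_one₀ hb₁0.le hb₁1)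
    linarith
  have hA2u' : b₂^2 * besselJ 2 (b₂*s) ≤ 1/8 := by
    have hp : s^2*b₂^4 ≤ 1 :=
      mul_le_one₀ (pow_le_one₀ hs0.le hs1) (pow_nonneg hb₂0.le 4) (pow_le_one₀ hb₂0.le hb₂1.le)
    linarith
  have hflip : besselJ 0 (b₂*s) - besselJ 0 (b₁*s) ≤ (b₂ - b₁) * s := by
    have h := J0_lip (b₂*s) (b₁*s)
    have he : |b₂*s - b₁*s| = (b₂ - b₁)*s := by
      rw [abs_of_nonneg (by nlinarith)]; ring
    rw [he] at h
    linarith [(abs_le.1 h).2]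
  have hfd' := mini2 hx₁0 hx12 hx₂1 (J2_diff hx₁0 hx12)
  have hJ22l := mini1 (le_trans hx₁0 hx12) hx₂1 (J2_ge (b₂*s))
  have hA := mini3 hs0 hs1 hb₁0 h12 hb₂1.le hfd' hJ22l
  have hnum := mini4 hs0 hs1 hb₁0 hb₁1 h12 hA f01l hA1l hA1u hflip
  have hD₁0 : (0:ℝ) < besselJ 0 (b₁*s) + b₁^2 * besselJ 2 (b₁*s) := by linarith
  have hD₂0 : (0:ℝ) < besselJ 0 (b₂*s) + b₂^2 * besselJ 2 (b₂*s) := by linarith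
  have hDD : (besselJ 0 (b₁*s) + b₁^2 * besselJ 2 (b₁*s)) *
      (besselJ 0 (b₂*s) + b₂^2 * besselJ 2 (b₂*s)) ≤ 81/64 :=
    mini6 (by linarith) (by linarith) (by linarith) (by linarith)
  have hfin := mini5 hs0 hb₁0 h12 hnum hDD
  have hgoal : dtnF b₁ γ - dtnF b₂ γ =
      ((besselJ 0 (b₁*s) - b₁^2 * besselJ 2 (b₁*s)) *
        (besselJ 0 (b₂*s) + b₂^2 * besselJ 2 (b₂*s)) -
       (besselJ 0 (b₂*s) - b₂^2 * besselJ 2 (b₂*s)) *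
        (besselJ 0 (b₁*s) + b₁^2 * besselJ 2 (b₁*s))) /
      ((besselJ 0 (b₁*s) + b₁^2 * besselJ 2 (b₁*s)) *
       (besselJ 0 (b₂*s) + b₂^2 * besselJ 2 (b₂*s))) := by
    simp only [dtnF, ← hs]
    rw [div_sub_div _ _ hD₁0.ne' hD₂0.ne']
    congr 1
    ring
  rw [hgoal, le_div_iff₀ (by positivity)]
  calc 2*γ*b₁^3/15*(b₂-b₁) * _ = 2*s^2*b₁^3/15*(b₂-b₁) * _ := by rw [hs2]
    _ ≤ _ := hfin

end BesselAux

theorem lipschitz_stability_fixed_height (γ b₁ b₂ : ℝ) (hγ : γ ∈ Set.Ioc (0 : ℝ) 1)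
    (hb₁ : b₁ ∈ Set.Ioo (0 : ℝ) 1) (hb₂ : b₂ ∈ Set.Ioo (0 : ℝ) 1) :
    |b₁ - b₂| ≤ 15 / (2 * γ * (min b₁ b₂) ^ 3) * |dtnF b₁ γ - dtnF b₂ γ| := by
  rcases le_total b₁ b₂ with h | h
  · have hk := BesselAux.key hγ.1 hγ.2 hb₁.1 hb₂.2 h
    rw [min_eq_left h, abs_sub_comm, abs_of_nonneg (by linarith : (0:ℝ) ≤ b₂ - b₁)]
    have h2 : (0:ℝ) < 2 * γ * b₁^3 := by
      have := hγ.1; have := hb₁.1; positivity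
    rw [div_mul_eq_mul_div, le_div_iff₀ h2]
    have hF : dtnF b₁ γ - dtnF b₂ γ ≤ |dtnF b₁ γ - dtnF b₂ γ| := le_abs_self _
    nlinarith [hk, hF]
  · have hk := BesselAux.key hγ.1 hγ.2 hb₂.1 hb₁.2 h
    rw [min_eq_right h, abs_of_nonneg (by linarith : (0:ℝ) ≤ b₁ - b₂)]
    have h2 : (0:ℝ) < 2 * γ * b₂^3 := by
      have := hγ.1; have := hb₂.1; positivity
    rw [div_mul_eq_mul_div, le_div_iff₀ h2]
    have hF : dtnF b₂ γ - dtnF b₁ γ ≤ |dtnF b₁ γ - dtnF b₂ γ| := by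
      rw [abs_sub_comm]; exact le_abs_self _
    nlinarith [hk, hF]
end

section
/- Let b_1, b_2 ∈ (0,1) and γ_1, γ_2 ∈ [0,1]. Define J⃗_1 = | b_2² S_2(b_2 √γ_2) − b_1² S_2(b_1 √γ_1) |, J⃗_2 = (1/8) | b_2⁴ γ_2 S_0(b_1 √γ_1) − b_1⁴ γ_1 S_0(b_2 √γ_2) |, and J⃗_3 = | b_2² S_0(b_1 √γ_1) S_2(b_2 √γ_2) − b_1² S_0(b_2 √γ_2) S_2(b_1 √γ_1) |. Then |F(b_1,γ_1) − F(b_2,γ_2)| ≥ 2 ( (1/8) | b_2⁴ γ_2 − b_1⁴ γ_1 | − J⃗_1 − J⃗_2 − J⃗_3 ) / ( (1 + b_1⁴ γ_1 / 8)(1 + b_2⁴ γ_2 / 8) ). -/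
open Real Set

/-- The remainder `S_n(r) = J_n(r) − r^n/(2^n n!)`. -/
noncomputable def besselS (n : ℕ) (r : ℝ) : ℝ :=
  besselJ n r - r ^ n / (2 ^ n * Nat.factorial n)

namespace DtnAux

open MeasureTheory intervalIntegral

lemma h1w : IntervalIntegrable (fun t : ℝ => (1 - t) ^ (-(1/2) : ℝ)) volume (-1) 1 := by
  have := ((intervalIntegrable_rpow' (a := 0) (b := 2) (r := -(1/2)) (by norm_num)).comp_sub_left 1).symm
  norm_num at this; exact this

lemma h2w : IntervalIntegrable (fun t : ℝ => (1 + t) ^ (-(1/2) : ℝ)) volume (-1) 1 := by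
  have := (intervalIntegrable_rpow' (a := 0) (b := 2) (r := -(1/2)) (by norm_num)).comp_add_left 1
  norm_num at this
  simpa [add_comm] using this

lemma wbound {t : ℝ} (ht : t ∈ Icc (-1:ℝ) 1) :
    (1 - t^2) ^ (-(1/2) : ℝ) ≤ (1 - t) ^ (-(1/2) : ℝ) + (1 + t) ^ (-(1/2) : ℝ) := by
  have h1 : (0:ℝ) ≤ 1 - t := by linarith [ht.2]
  have h2 : (0:ℝ) ≤ 1 + t := by linarith [ht.1]
  have hfact : (1 - t^2 : ℝ) = (1 - t) * (1 + t) := by ring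
  rw [hfact, Real.mul_rpow h1 h2]
  rcases le_total 0 t with h | h
  · have : (1 + t) ^ (-(1/2) : ℝ) ≤ 1 :=
      Real.rpow_le_one_of_one_le_of_nonpos (by linarith) (by norm_num)
    nlinarith [Real.rpow_nonneg h1 (-(1/2) : ℝ), Real.rpow_nonneg h2 (-(1/2) : ℝ)]
  · have : (1 - t) ^ (-(1/2) : ℝ) ≤ 1 :=
      Real.rpow_le_one_of_one_le_of_nonpos (by linarith) (by norm_num)
    nlinarith [Real.rpow_nonneg h1 (-(1/2) : ℝ), Real.rpow_nonneg h2 (-(1/2) : ℝ)]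

lemma intInt_cos_w (r : ℝ) :
    IntervalIntegrable (fun t : ℝ => Real.cos (r*t) * (1 - t^2) ^ (-(1/2) : ℝ)) volume (-1) 1 := by
  apply IntervalIntegrable.mono_fun' (g := fun t : ℝ => (1 - t) ^ (-(1/2) : ℝ) + (1 + t) ^ (-(1/2) : ℝ))
    (h1w.add h2w)
  · apply Measurable.aestronglyMeasurable
    exact (Real.measurable_cos.comp (measurable_const_mul r)).mul (by measurability)
  · have hsub : uIoc (-1:ℝ) 1 ⊆ Icc (-1:ℝ) 1 := by
      rw [uIoc_of_le (by norm_num : (-1:ℝ) ≤ 1)]; exact Ioc_subset_Icc_self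
    filter_upwards [ae_restrict_mem measurableSet_uIoc] with t ht
    have ht' := hsub ht
    have hw : (0:ℝ) ≤ (1 - t^2) ^ (-(1/2) : ℝ) :=
      Real.rpow_nonneg (by nlinarith [ht'.1, ht'.2]) _
    have : ‖Real.cos (r*t) * (1 - t^2) ^ (-(1/2) : ℝ)‖ ≤ (1 - t^2) ^ (-(1/2) : ℝ) := by
      rw [norm_mul, Real.norm_eq_abs, Real.norm_eq_abs, abs_of_nonneg hw]
      nlinarith [abs_cos_le_one (r*t), abs_nonneg (Real.cos (r*t))]
    exact this.trans (wbound ht')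

lemma intInt_w : IntervalIntegrable (fun t : ℝ => (1 - t^2) ^ (-(1/2) : ℝ)) volume (-1) 1 := by
  simpa using intInt_cos_w 0

lemma integral_w : ∫ t in (-1:ℝ)..1, (1 - t^2) ^ (-(1/2) : ℝ) = π := by
  have h : ∫ t in (-1:ℝ)..1, (1 - t^2) ^ (-(1/2) : ℝ) = Real.arcsin 1 - Real.arcsin (-1) := by
    apply integral_eq_sub_of_hasDeriv_right_of_le (by norm_num)
      (Real.continuous_arcsin.continuousOn)
    · intro x hx
      have h1 : x ≠ -1 := by rintro rfl; exact lt_irrefl _ hx.1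
      have h2 : x ≠ 1 := by rintro rfl; exact lt_irrefl _ hx.2
      have hpos : (0:ℝ) < 1 - x^2 := by nlinarith [hx.1, hx.2]
      have := Real.hasDerivAt_arcsin h1 h2
      have heq : 1 / Real.sqrt (1 - x^2) = (1 - x^2) ^ (-(1/2) : ℝ) := by
        rw [Real.rpow_neg hpos.le, Real.sqrt_eq_rpow, one_div]
      rw [heq] at this
      exact this.hasDerivWithinAt
    · exact intInt_w
  rw [h, Real.arcsin_one, Real.arcsin_neg_one]; ring

lemma integral_w3 : ∫ t in (-1:ℝ)..1, (1 - t^2) ^ ((3:ℝ)/2) = 3 * π / 8 := by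
  have hg : Continuous fun u : ℝ => (1 - u^2) ^ ((3:ℝ)/2) :=
    (continuous_const.sub (continuous_pow 2)).rpow_const (fun x => Or.inr (by norm_num))
  have hsub : (∫ x in (-(π/2))..(π/2), (1 - Real.sin x ^ 2) ^ ((3:ℝ)/2) * Real.cos x)
      = ∫ u in (-1:ℝ)..1, (1 - u^2) ^ ((3:ℝ)/2) := by
    have := integral_comp_mul_deriv (a := -(π/2)) (b := π/2) (f := Real.sin) (f' := Real.cos)
      (g := fun u : ℝ => (1 - u^2) ^ ((3:ℝ)/2))
      (fun x _ => Real.hasDerivAt_sin x) Real.continuousOn_cos hg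
    simpa using this
  have hc4 : (∫ x in (-(π/2))..(π/2), (1 - Real.sin x ^ 2) ^ ((3:ℝ)/2) * Real.cos x)
      = ∫ x in (-(π/2))..(π/2), Real.cos x ^ 4 := by
    apply integral_congr
    intro x hx
    rw [uIcc_of_le (by linarith [pi_pos] : -(π/2) ≤ π/2)] at hx
    have hcos : 0 ≤ Real.cos x := Real.cos_nonneg_of_mem_Icc hx
    have h1 : (1 - Real.sin x ^ 2 : ℝ) = Real.cos x ^ 2 := by
      have := Real.sin_sq_add_cos_sq x; linarith
    show (1 - Real.sin x ^ 2 : ℝ) ^ ((3:ℝ)/2) * Real.cos x = Real.cos x ^ 4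
    rw [h1]
    have : ((Real.cos x ^ 2 : ℝ)) ^ ((3:ℝ)/2) = Real.cos x ^ 3 := by
      rw [← Real.rpow_natCast (Real.cos x) 2, ← Real.rpow_mul hcos, ← Real.rpow_natCast (Real.cos x) 3]
      norm_num
    rw [this, ← pow_succ]
  have h4 : (∫ x in (-(π/2))..(π/2), Real.cos x ^ 4) = 3 * π / 8 := by
    rw [integral_cos_pow 2]
    simp [Real.cos_pi_div_two, Real.sin_pi_div_two]
    ring
  rw [← hsub, hc4, h4]

lemma cos_mul_ge {r t : ℝ} (hr : r ∈ Icc (0:ℝ) 1) (ht : t ∈ Icc (-1:ℝ) 1) :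
    Real.cos 1 ≤ Real.cos (r * t) := by
  rw [← Real.cos_abs (r*t)]
  apply Real.cos_le_cos_of_nonneg_of_le_pi (abs_nonneg _) (by linarith [Real.pi_gt_three])
  rw [abs_mul, abs_of_nonneg hr.1]
  have : |t| ≤ 1 := by rw [abs_le]; exact ⟨ht.1, ht.2⟩
  nlinarith [abs_nonneg t, hr.1, hr.2]

lemma cos_one_pos : (0:ℝ) < Real.cos 1 :=
  Real.cos_pos_of_mem_Ioo (by constructor <;> nlinarith [Real.pi_gt_three])

lemma w_nonneg {t : ℝ} (ht : t ∈ Icc (-1:ℝ) 1) : (0:ℝ) ≤ (1 - t^2) ^ (-(1/2) : ℝ) :=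
  Real.rpow_nonneg (by nlinarith [ht.1, ht.2]) _

lemma w3_nonneg {t : ℝ} (ht : t ∈ Icc (-1:ℝ) 1) : (0:ℝ) ≤ (1 - t^2) ^ ((3:ℝ)/2) :=
  Real.rpow_nonneg (by nlinarith [ht.1, ht.2]) _

lemma I0_bounds {r : ℝ} (hr : r ∈ Icc (0:ℝ) 1) :
    Real.cos 1 * π ≤ (∫ t in (-1:ℝ)..1, Real.cos (r*t) * (1 - t^2) ^ (-(1/2) : ℝ)) ∧
    (∫ t in (-1:ℝ)..1, Real.cos (r*t) * (1 - t^2) ^ (-(1/2) : ℝ)) ≤ π := by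
  constructor
  · rw [← integral_w, ← intervalIntegral.integral_const_mul]
    apply integral_mono_on (by norm_num) (intInt_w.const_mul _) (intInt_cos_w r)
    intro t ht
    exact mul_le_mul_of_nonneg_right (cos_mul_ge hr ht) (w_nonneg ht)
  · rw [← integral_w]
    apply integral_mono_on (by norm_num) (intInt_cos_w r) intInt_w
    intro t ht
    calc Real.cos (r*t) * (1 - t^2) ^ (-(1/2) : ℝ)
        ≤ 1 * (1 - t^2) ^ (-(1/2) : ℝ) :=
          mul_le_mul_of_nonneg_right (Real.cos_le_one _) (w_nonneg ht)
      _ = _ := one_mul _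

lemma I2_bounds {r : ℝ} (hr : r ∈ Icc (0:ℝ) 1) :
    0 ≤ (∫ t in (-1:ℝ)..1, Real.cos (r*t) * (1 - t^2) ^ ((3:ℝ)/2)) ∧
    (∫ t in (-1:ℝ)..1, Real.cos (r*t) * (1 - t^2) ^ ((3:ℝ)/2)) ≤ 3 * π / 8 := by
  have hgc : Continuous fun u : ℝ => (1 - u^2) ^ ((3:ℝ)/2) :=
    (continuous_const.sub (continuous_pow 2)).rpow_const (fun x => Or.inr (by norm_num))
  have hint : IntervalIntegrable (fun t : ℝ => Real.cos (r*t) * (1 - t^2) ^ ((3:ℝ)/2)) volume (-1) 1 :=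
    ((Real.continuous_cos.comp (continuous_const.mul continuous_id)).mul hgc).intervalIntegrable _ _
  have hint3 : IntervalIntegrable (fun t : ℝ => (1 - t^2) ^ ((3:ℝ)/2)) volume (-1) 1 :=
    hgc.intervalIntegrable _ _
  constructor
  · apply intervalIntegral.integral_nonneg (by norm_num)
    intro t ht
    exact mul_nonneg (le_trans cos_one_pos.le (cos_mul_ge hr ht)) (w3_nonneg ht)
  · rw [← integral_w3]
    apply integral_mono_on (by norm_num) hint hint3
    intro t ht
    calc Real.cos (r*t) * (1 - t^2) ^ ((3:ℝ)/2)
        ≤ 1 * (1 - t^2) ^ ((3:ℝ)/2) :=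
          mul_le_mul_of_nonneg_right (Real.cos_le_one _) (w3_nonneg ht)
      _ = _ := one_mul _

lemma besselJ_zero (r : ℝ) :
    besselJ 0 r = (∫ t in (-1:ℝ)..1, Real.cos (r*t) * (1 - t^2) ^ (-(1/2) : ℝ)) / π := by
  have h : ((0:ℕ):ℝ) - 1/2 = -(1/2 : ℝ) := by norm_num
  rw [besselJ, h]
  rw [show ((0:ℕ):ℝ) + 1/2 = (1/2:ℝ) by norm_num, Real.Gamma_one_half_eq]
  rw [pow_zero, pow_zero, one_mul, Real.mul_self_sqrt Real.pi_pos.le]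
  ring

lemma besselJ_two (r : ℝ) :
    besselJ 2 r = r^2 / (3*π) * (∫ t in (-1:ℝ)..1, Real.cos (r*t) * (1 - t^2) ^ ((3:ℝ)/2)) := by
  have h : ((2:ℕ):ℝ) - 1/2 = (3:ℝ)/2 := by norm_num
  have hg : Real.Gamma (((2:ℕ):ℝ) + 1/2) = 3/4 * Real.sqrt π := by
    have h1 : ((2:ℕ):ℝ) + 1/2 = (3/2 : ℝ) + 1 := by norm_num
    have h2 : (3/2 : ℝ) = (1/2 : ℝ) + 1 := by norm_num
    rw [h1, Real.Gamma_add_one (by norm_num), h2, Real.Gamma_add_one (by norm_num)]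
    rw [Real.Gamma_one_half_eq]; ring
  rw [besselJ, h, hg]
  have : Real.sqrt π * Real.sqrt π = π := Real.mul_self_sqrt Real.pi_pos.le
  rw [div_mul_eq_mul_div, div_mul_eq_mul_div, mul_comm]
  rw [show (2:ℝ)^2 * (3 * √π / 4) * √π = 3 * (√π * √π) by ring, this]
  ring

lemma besselJ_zero_bounds {r : ℝ} (hr : r ∈ Icc (0:ℝ) 1) :
    Real.cos 1 ≤ besselJ 0 r ∧ besselJ 0 r ≤ 1 := by
  rw [besselJ_zero]
  obtain ⟨hl, hu⟩ := I0_bounds hr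
  constructor
  · rw [le_div_iff₀ Real.pi_pos]; linarith
  · rw [div_le_one Real.pi_pos]; linarith

lemma besselJ_two_bounds {r : ℝ} (hr : r ∈ Icc (0:ℝ) 1) :
    0 ≤ besselJ 2 r ∧ besselJ 2 r ≤ r^2 / 8 := by
  rw [besselJ_two]
  obtain ⟨hl, hu⟩ := I2_bounds hr
  have hr2 : (0:ℝ) ≤ r^2 / (3*π) := by positivity
  constructor
  · exact mul_nonneg hr2 hl
  · calc r^2 / (3*π) * (∫ t in (-1:ℝ)..1, Real.cos (r*t) * (1 - t^2) ^ ((3:ℝ)/2))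
        ≤ r^2 / (3*π) * (3 * π / 8) := mul_le_mul_of_nonneg_left hu hr2
      _ = r^2 / 8 := by
          field_simp

end DtnAux

theorem dtnF_difference_lower_bound (b₁ b₂ γ₁ γ₂ : ℝ) (hb₁ : b₁ ∈ Set.Ioo (0 : ℝ) 1)
    (hb₂ : b₂ ∈ Set.Ioo (0 : ℝ) 1) (hγ₁ : γ₁ ∈ Set.Icc (0 : ℝ) 1)
    (hγ₂ : γ₂ ∈ Set.Icc (0 : ℝ) 1) :
    |dtnF b₁ γ₁ - dtnF b₂ γ₂| ≥
      2 * (1 / 8 * |b₂ ^ 4 * γ₂ - b₁ ^ 4 * γ₁|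
          - |b₂ ^ 2 * besselS 2 (b₂ * Real.sqrt γ₂) - b₁ ^ 2 * besselS 2 (b₁ * Real.sqrt γ₁)|
          - 1 / 8 * |b₂ ^ 4 * γ₂ * besselS 0 (b₁ * Real.sqrt γ₁)
              - b₁ ^ 4 * γ₁ * besselS 0 (b₂ * Real.sqrt γ₂)|
          - |b₂ ^ 2 * besselS 0 (b₁ * Real.sqrt γ₁) * besselS 2 (b₂ * Real.sqrt γ₂)
              - b₁ ^ 2 * besselS 0 (b₂ * Real.sqrt γ₂) * besselS 2 (b₁ * Real.sqrt γ₁)|) /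
        ((1 + b₁ ^ 4 * γ₁ / 8) * (1 + b₂ ^ 4 * γ₂ / 8)) := by
  obtain ⟨hb₁0, hb₁1⟩ := hb₁
  obtain ⟨hb₂0, hb₂1⟩ := hb₂
  obtain ⟨hγ₁0, hγ₁1⟩ := hγ₁
  obtain ⟨hγ₂0, hγ₂1⟩ := hγ₂
  set r₁ := b₁ * Real.sqrt γ₁ with hr₁def
  set r₂ := b₂ * Real.sqrt γ₂ with hr₂def
  have hr₁ : r₁ ∈ Set.Icc (0:ℝ) 1 := by
    constructor
    · exact mul_nonneg hb₁0.le (Real.sqrt_nonneg _)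
    · calc b₁ * Real.sqrt γ₁ ≤ 1 * 1 :=
          mul_le_mul hb₁1.le (Real.sqrt_le_one.mpr hγ₁1) (Real.sqrt_nonneg _) zero_le_one
        _ = 1 := one_mul 1
  have hr₂ : r₂ ∈ Set.Icc (0:ℝ) 1 := by
    constructor
    · exact mul_nonneg hb₂0.le (Real.sqrt_nonneg _)
    · calc b₂ * Real.sqrt γ₂ ≤ 1 * 1 :=
          mul_le_mul hb₂1.le (Real.sqrt_le_one.mpr hγ₂1) (Real.sqrt_nonneg _) zero_le_one
        _ = 1 := one_mul 1
  have hr₁sq : r₁^2 = b₁^2 * γ₁ := by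
    rw [hr₁def, mul_pow, Real.sq_sqrt hγ₁0]
  have hr₂sq : r₂^2 = b₂^2 * γ₂ := by
    rw [hr₂def, mul_pow, Real.sq_sqrt hγ₂0]
  -- abbreviations
  set A₁ := besselJ 0 r₁ with hA₁def
  set A₂ := besselJ 0 r₂ with hA₂def
  set J₁ := besselJ 2 r₁ with hJ₁def
  set J₂ := besselJ 2 r₂ with hJ₂def
  set s₁ := besselS 0 r₁ with hs₁def
  set s₂ := besselS 0 r₂ with hs₂def
  set u₁ := besselS 2 r₁ with hu₁def
  set u₂ := besselS 2 r₂ with hu₂def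
  have hSA₁ : A₁ = 1 + s₁ := by rw [hs₁def, besselS]; simp; rfl
  have hSA₂ : A₂ = 1 + s₂ := by rw [hs₂def, besselS]; simp; rfl
  have hSJ₁ : J₁ = b₁^2 * γ₁ / 8 + u₁ := by
    rw [hu₁def, besselS, ← hr₁sq]; norm_num [Nat.factorial]; rfl
  have hSJ₂ : J₂ = b₂^2 * γ₂ / 8 + u₂ := by
    rw [hu₂def, besselS, ← hr₂sq]; norm_num [Nat.factorial]; rfl
  obtain ⟨hA₁l, hA₁u⟩ := DtnAux.besselJ_zero_bounds hr₁
  obtain ⟨hA₂l, hA₂u⟩ := DtnAux.besselJ_zero_bounds hr₂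
  obtain ⟨hJ₁l, hJ₁u⟩ := DtnAux.besselJ_two_bounds hr₁
  obtain ⟨hJ₂l, hJ₂u⟩ := DtnAux.besselJ_two_bounds hr₂
  rw [hr₁sq] at hJ₁u
  rw [hr₂sq] at hJ₂u
  have hc1 := DtnAux.cos_one_pos
  -- denominators
  set P₁ := A₁ + b₁^2 * J₁ with hP₁def
  set P₂ := A₂ + b₂^2 * J₂ with hP₂def
  have hP₁pos : 0 < P₁ := by
    have := mul_nonneg (sq_nonneg b₁) hJ₁l
    rw [hP₁def]; linarith
  have hP₂pos : 0 < P₂ := by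
    have := mul_nonneg (sq_nonneg b₂) hJ₂l
    rw [hP₂def]; linarith
  set D₁ := 1 + b₁^4*γ₁/8 with hD₁def
  set D₂ := 1 + b₂^4*γ₂/8 with hD₂def
  have hD₁pos : 0 < D₁ := by positivity
  have hD₂pos : 0 < D₂ := by positivity
  have hP₁le : P₁ ≤ D₁ := by
    have h := mul_le_mul_of_nonneg_left hJ₁u (sq_nonneg b₁)
    rw [hP₁def, hD₁def]
    have hq : b₁^2 * (b₁^2 * γ₁ / 8) = b₁^4*γ₁/8 := by ring
    rw [hq] at h; linarith
  have hP₂le : P₂ ≤ D₂ := by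
    have h := mul_le_mul_of_nonneg_left hJ₂u (sq_nonneg b₂)
    rw [hP₂def, hD₂def]
    have hq : b₂^2 * (b₂^2 * γ₂ / 8) = b₂^4*γ₂/8 := by ring
    rw [hq] at h; linarith
  have hF₁ : dtnF b₁ γ₁ = (A₁ - b₁^2 * J₁) / P₁ := by
    rw [dtnF, ← hr₁def, ← hA₁def, ← hJ₁def, hP₁def]
  have hF₂ : dtnF b₂ γ₂ = (A₂ - b₂^2 * J₂) / P₂ := by
    rw [dtnF, ← hr₂def, ← hA₂def, ← hJ₂def, hP₂def]
  set num := A₁ * (b₂^2 * J₂) - A₂ * (b₁^2 * J₁) with hnumdef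
  have hdiff : dtnF b₁ γ₁ - dtnF b₂ γ₂ = 2 * num / (P₁ * P₂) := by
    rw [hF₁, hF₂, div_sub_div _ _ (ne_of_gt hP₁pos) (ne_of_gt hP₂pos)]
    congr 1
    rw [hnumdef, hP₁def, hP₂def]; ring
  have habs : |dtnF b₁ γ₁ - dtnF b₂ γ₂| = 2 * |num| / (P₁ * P₂) := by
    rw [hdiff, abs_div, abs_mul, abs_of_pos (mul_pos hP₁pos hP₂pos), abs_two]
  -- numerator decomposition
  set X₁ := b₂^2 * u₂ - b₁^2 * u₁ with hX₁def
  set X₂ := b₂^4 * γ₂ * s₁ - b₁^4 * γ₁ * s₂ with hX₂def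
  set X₃ := b₂^2 * s₁ * u₂ - b₁^2 * s₂ * u₁ with hX₃def
  have hnum : num = (b₂^4 * γ₂ - b₁^4 * γ₁)/8 + X₁ + X₂/8 + X₃ := by
    rw [hnumdef, hSA₁, hSA₂, hSJ₁, hSJ₂, hX₁def, hX₂def, hX₃def]; ring
  have htri : 1/8 * |b₂^4 * γ₂ - b₁^4 * γ₁| - |X₁| - 1/8 * |X₂| - |X₃| ≤ |num| := by
    have h1 : (b₂^4 * γ₂ - b₁^4 * γ₁)/8 = num - X₁ - X₂/8 - X₃ := by rw [hnum]; ring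
    have h2 : |(b₂^4 * γ₂ - b₁^4 * γ₁)/8| ≤ |num| + |X₁| + |X₂/8| + |X₃| := by
      rw [h1]
      calc |num - X₁ - X₂/8 - X₃| ≤ |num - X₁ - X₂/8| + |X₃| := abs_sub _ _
        _ ≤ |num - X₁| + |X₂/8| + |X₃| := by linarith [abs_sub (num - X₁) (X₂/8)]
        _ ≤ |num| + |X₁| + |X₂/8| + |X₃| := by linarith [abs_sub num X₁]
    simp only [abs_div, abs_of_pos (show (0:ℝ) < 8 by norm_num)] at h2
    linarith
  rw [ge_iff_le, habs]
  rcases le_or_gt (1 / 8 * |b₂ ^ 4 * γ₂ - b₁ ^ 4 * γ₁| - |X₁| - 1/8 * |X₂| - |X₃|) 0 with hN | hN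
  · calc 2 * (1 / 8 * |b₂ ^ 4 * γ₂ - b₁ ^ 4 * γ₁| - |X₁| - 1/8 * |X₂| - |X₃|) / (D₁ * D₂) ≤ 0 :=
        div_nonpos_iff.mpr (Or.inr ⟨by linarith, by positivity⟩)
      _ ≤ 2 * |num| / (P₁ * P₂) :=
        div_nonneg (mul_nonneg zero_le_two (abs_nonneg _)) (mul_pos hP₁pos hP₂pos).le
  · apply div_le_div₀ (mul_nonneg zero_le_two (abs_nonneg _)) (by linarith) (mul_pos hP₁pos hP₂pos)
    exact mul_le_mul hP₁le hP₂le hP₂pos.le hD₁pos.le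
end
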